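/- arXiv:2412.04574 — 4 statements merged into one kernel-verified Lean document; each statement's English description precedes it below -/
import Mathlib

section
/- Let (X, d) be a metric space and f : X → [−∞,+∞]. If f is (K,N)-convex for some K ≥ 0 and N < 0, then f_N = exp(−f/N) is 0-convex, i.e. convex along geodesics: for all x₀, x₁ ∈ D[f_N] there exists a geodesic γ : [0,1] → X from x₀ to x₁ with f_N(γ_t) ≤ (1−t)·f_N(x₀) + t·f_N(x₁) for all t ∈ [0,1]. -/
open Filter MeasureTheory Set
open scoped ENNReal Topology

noncomputable section

namespace KNPaper

variable {X : Type*} [MetricSpace X]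

/-- A geodesic parametrized on `[0,1]`: `d(γ s, γ t) = |t - s| * d(γ 0, γ 1)`. -/
def IsGeodesic (γ : ℝ → X) : Prop :=
  ∀ s ∈ Set.Icc (0:ℝ) 1, ∀ t ∈ Set.Icc (0:ℝ) 1,
    dist (γ s) (γ t) = |t - s| * dist (γ 0) (γ 1)

/-- Extended exponential `EReal → ℝ≥0∞`, with `exp ⊥ = 0` and `exp ⊤ = ⊤`. -/
def eexp (x : EReal) : ℝ≥0∞ :=
  if x = ⊤ then ⊤ else if x = ⊥ then 0 else ENNReal.ofReal (Real.exp x.toReal)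

/-- The nonnegative part of an extended real, valued in `ℝ≥0∞`. -/
def epos (x : EReal) : ℝ≥0∞ :=
  if x = ⊤ then ⊤ else ENNReal.ofReal x.toReal

/-- `f_N := exp (-f/N)`, with the conventions `exp(-∞) = 0`, `exp(+∞) = +∞`. -/
def fN (f : X → EReal) (N : ℝ) (x : X) : ℝ≥0∞ :=
  eexp (((-1/N : ℝ) : EReal) * f x)

/-- The finiteness domain `D[f]`. -/
def Dom (f : X → EReal) : Set X := {x | f x ≠ ⊤ ∧ f x ≠ ⊥}

/-- The extended domain `D*[f]`. -/
def DomStar (f : X → EReal) : Set X := {x | f x ≠ ⊤}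

/-- The function `𝔰_{K,N}`. -/
def sKN (K N θ : ℝ) : ℝ :=
  if K < 0 then Real.sin (θ * Real.sqrt (K/N)) / Real.sqrt (K/N)
  else if K = 0 then θ
  else Real.sinh (θ * Real.sqrt (-K/N)) / Real.sqrt (-K/N)

/-- The function `𝔠_{K,N}`. -/
def cKN (K N θ : ℝ) : ℝ :=
  if K < 0 then Real.cos (θ * Real.sqrt (K/N))
  else if K = 0 then 1
  else Real.cosh (θ * Real.sqrt (-K/N))

/-- The distortion coefficient `σ_{K,N}^{(t)}(θ)`, valued in `[0,∞]`. -/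
def sigmaKN (K N t θ : ℝ) : ℝ≥0∞ :=
  if (N * Real.pi ^ 2 < K * θ ^ 2 ∧ K * θ ^ 2 < 0) ∨ 0 < K * θ ^ 2 then
    ENNReal.ofReal (sKN K N (t * θ) / sKN K N θ)
  else if K * θ ^ 2 = 0 then ENNReal.ofReal t
  else ⊤

/-- `(K,N)`-convexity of `f` on a subset `s` (with `N < 0`). -/
def KNConvexOn (f : X → EReal) (K N : ℝ) (s : Set X) : Prop :=
  ∀ x₀ ∈ s, ∀ x₁ ∈ s, f x₀ ≠ ⊤ → f x₁ ≠ ⊤ →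
    (K < 0 → dist x₀ x₁ < Real.pi * Real.sqrt (N / K)) →
    ∃ γ : ℝ → X, IsGeodesic γ ∧ (∀ t ∈ Set.Icc (0:ℝ) 1, γ t ∈ s) ∧ γ 0 = x₀ ∧ γ 1 = x₁ ∧
      ∀ t ∈ Set.Icc (0:ℝ) 1,
        fN f N (γ t) ≤ sigmaKN K N (1 - t) (dist x₀ x₁) * fN f N x₀
          + sigmaKN K N t (dist x₀ x₁) * fN f N x₁

/-- `(K,N)`-convexity of `f` (with `N < 0`). -/
def KNConvex (f : X → EReal) (K N : ℝ) : Prop := KNConvexOn f K N Set.univ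

/-- `λ`-convexity of an extended-real-valued function along geodesics. -/
def LambdaConvex (g : X → EReal) (lam : ℝ) : Prop :=
  ∀ x₀ x₁ : X, x₀ ∈ Dom g → x₁ ∈ Dom g →
    ∃ γ : ℝ → X, IsGeodesic γ ∧ γ 0 = x₀ ∧ γ 1 = x₁ ∧
      ∀ t ∈ Set.Icc (0:ℝ) 1,
        g (γ t) ≤ (((1 - t) * (g x₀).toReal + t * (g x₁).toReal
          - lam / 2 * (t * (1 - t)) * dist x₀ x₁ ^ 2 : ℝ) : EReal)

/-- Upper right Dini derivative of a real function, valued in `EReal`. -/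
def diniUR (g : ℝ → ℝ) (t : ℝ) : EReal :=
  Filter.limsup (fun h : ℝ => (((g (t + h) - g t) / h : ℝ) : EReal)) (𝓝[>] (0:ℝ))

/-- The time interval `(0,T)` for `T ∈ (0,∞]`, as a set of reals. -/
def domT (T : ℝ≥0∞) : Set ℝ := {t : ℝ | 0 < t ∧ ENNReal.ofReal t < T}

/-- `EVI_λ` gradient curve for `g` on `(0,T)`. -/
def IsEVIlam (g : X → EReal) (lam : ℝ) (T : ℝ≥0∞) (z : ℝ → X) : Prop :=
  0 < T ∧ ContinuousOn z (domT T) ∧ (∀ t ∈ domT T, z t ∈ Dom g) ∧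
    ∀ t ∈ domT T, ∀ x ∈ Dom g,
      diniUR (fun s => dist (z s) x ^ 2 / 2) t + ((lam / 2 * dist (z t) x ^ 2 : ℝ) : EReal)
        ≤ (((g x).toReal - (g (z t)).toReal : ℝ) : EReal)

/-- `EVI_{K,N}` gradient curve for `f` on `(0,T)` (with `N < 0`). -/
def IsEVIKN (f : X → EReal) (K N : ℝ) (T : ℝ≥0∞) (y : ℝ → X) : Prop :=
  0 < T ∧ ContinuousOn y (domT T) ∧ (∀ t ∈ domT T, y t ∈ Dom f) ∧
    ∀ t ∈ domT T, ∀ x ∈ closure (Dom f),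
      (K < 0 → dist (y t) x < Real.pi * Real.sqrt (N / K)) →
      diniUR (fun s => sKN K N (dist (y s) x / 2) ^ 2) t
          + ((K * sKN K N (dist (y t) x / 2) ^ 2 : ℝ) : EReal)
        ≤ ((N / 2 : ℝ) : EReal) * (1 - ((fN f N x / fN f N (y t) : ℝ≥0∞) : EReal))

/-- A curve starts at `y₀` if `y_t → y₀` as `t ↓ 0`. -/
def StartsAt (y : ℝ → X) (y₀ : X) : Prop := Filter.Tendsto y (𝓝[>] (0:ℝ)) (𝓝 y₀)

/-- The class `𝒞` of continuous curves on `(0,T)` with values in `D[f]`. -/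
def InC (f : X → EReal) (T : ℝ≥0∞) (y : ℝ → X) : Prop :=
  0 < T ∧ ContinuousOn y (domT T) ∧ ∀ t ∈ domT T, y t ∈ Dom f

/-- The class `𝒞'`: curves in `𝒞` along which `f` is non-increasing. -/
def InC' (f : X → EReal) (T : ℝ≥0∞) (y : ℝ → X) : Prop :=
  InC f T y ∧ ∀ s ∈ domT T, ∀ t ∈ domT T, s ≤ t → f (y t) ≤ f (y s)

/-- The class `𝒞''_N`: curves in `𝒞'` with `∫₀^{min(T,1)} f_N(y_t) dt < ∞`. -/
def InC'' (f : X → EReal) (N : ℝ) (T : ℝ≥0∞) (y : ℝ → X) : Prop :=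
  InC' f T y ∧ ∫⁻ t in Set.Ioo (0:ℝ) ((min T 1).toReal), fN f N (y t) < ⊤

/-- The function `α(t) = -N ∫₀ᵗ f_N(y_r)⁻¹ dr`. -/
def alphaMap (f : X → EReal) (N : ℝ) (y : ℝ → X) (t : ℝ) : ℝ :=
  -N * ∫ r in Set.Ioo (0:ℝ) t, ((fN f N (y r))⁻¹).toReal

/-- The final time `T' = lim_{t→T⁻} α(t)` of the reparametrized curve `ℛ₁(y)`. -/
def R1T (f : X → EReal) (N : ℝ) (T : ℝ≥0∞) (y : ℝ → X) : ℝ≥0∞ :=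
  ⨆ t ∈ domT T, ENNReal.ofReal (alphaMap f N y t)

/-- The reparametrized curve `ℛ₁(y) = y ∘ φ`, `φ = α⁻¹`. -/
def R1fun (f : X → EReal) (N : ℝ) (T : ℝ≥0∞) (y : ℝ → X) : ℝ → X :=
  y ∘ Function.invFunOn (alphaMap f N y) (domT T)

/-- The function `β(s) = -(1/N) ∫₀ˢ f_N(z_r) dr`. -/
def betaMap (f : X → EReal) (N : ℝ) (z : ℝ → X) (s : ℝ) : ℝ :=
  -(1/N) * ∫ r in Set.Ioo (0:ℝ) s, (fN f N (z r)).toReal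

/-- The final time `T = lim_{s→T'⁻} β(s)` of the reparametrized curve `ℛ₂(z)`. -/
def R2T (f : X → EReal) (N : ℝ) (T' : ℝ≥0∞) (z : ℝ → X) : ℝ≥0∞ :=
  ⨆ s ∈ domT T', ENNReal.ofReal (betaMap f N z s)

/-- The reparametrized curve `ℛ₂(z) = z ∘ ψ`, `ψ = β⁻¹`. -/
def R2fun (f : X → EReal) (N : ℝ) (T' : ℝ≥0∞) (z : ℝ → X) : ℝ → X :=
  z ∘ Function.invFunOn (betaMap f N z) (domT T')

/-- The descending slope `|D⁻f|(y) = limsup_{z→y} (f(y)-f(z))⁺ / d(z,y)`, in `[0,∞]`. -/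
def descSlope (f : X → EReal) (y : X) : ℝ≥0∞ :=
  Filter.limsup (fun z : X => epos (f y - f z) / ENNReal.ofReal (dist z y)) (𝓝[≠] y)

/-- Directional derivative `g'(γ 0; ·) = liminf_{t↓0} (g(γ t) - g(γ 0))/t` along a curve. -/
def dirDeriv (g : X → EReal) (γ : ℝ → X) : EReal :=
  Filter.liminf (fun t : ℝ => (g (γ t) - g (γ 0)) * (((1/t : ℝ)) : EReal)) (𝓝[>] (0:ℝ))

/-- The quantity `[ẏ, z]_{t₀} = sup_{0<s≤1} (1/(2s)) (d⁺/dt)|_{t₀} d(y_t, z_s)²`. -/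
def bracket (y z : ℝ → X) (t₀ : ℝ) : EReal :=
  ⨆ s ∈ Set.Ioc (0:ℝ) 1,
    (((1 / (2 * s) : ℝ)) : EReal) * diniUR (fun t => dist (y t) (z s) ^ 2) t₀

/-- Metric speed `|γ̇|(t) = lim_{h→0} d(γ(t+h), γ(t))/|h| = v`. -/
def HasMetricSpeedAt (γ : ℝ → X) (t v : ℝ) : Prop :=
  Filter.Tendsto (fun h : ℝ => dist (γ (t + h)) (γ t) / |h|) (𝓝[≠] (0:ℝ)) (𝓝 v)

open Classical in
/-- The metric speed of a curve at a time (defaulting to `0` when it does not exist). -/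
def metricSpeed (γ : ℝ → X) (t : ℝ) : ℝ :=
  if h : ∃ v, HasMetricSpeedAt γ t v then h.choose else 0

/-- Metric absolute continuity on `[s,t]` with derivative control in `Lᵖ`. -/
def MetricACWith (p : ℝ≥0∞) (γ : ℝ → X) (s t : ℝ) : Prop :=
  ∃ g : ℝ → ℝ, MeasureTheory.MemLp g p (MeasureTheory.volume.restrict (Set.Icc s t)) ∧
    ∀ u ∈ Set.Icc s t, ∀ v ∈ Set.Icc s t, u ≤ v → dist (γ u) (γ v) ≤ ∫ r in u..v, g r

/-- `ACᵖ_loc` on a set: metric absolute continuity on every compact subinterval. -/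
def LocACOn (p : ℝ≥0∞) (γ : ℝ → X) (I : Set ℝ) : Prop :=
  ∀ s t : ℝ, s ≤ t → Set.Icc s t ⊆ I → MetricACWith p γ s t

/-- Curve of maximal slope for `f` on `(0,T)`. -/
def IsMaxSlopeCurve (f : X → EReal) (T : ℝ≥0∞) (y : ℝ → X) : Prop :=
  0 < T ∧ (∀ t ∈ domT T, y t ∈ Dom f) ∧
  LocACOn 1 y (domT T) ∧
  LocACOn 1 (fun t => (f (y t)).toReal) (domT T) ∧
  (∀ᵐ t ∂(MeasureTheory.volume.restrict (domT T)), ∃ v : ℝ, HasMetricSpeedAt y t v) ∧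
  ∀ᵐ t ∂(MeasureTheory.volume.restrict (domT T)),
    ∃ d : ℝ, HasDerivAt (fun s => (f (y s)).toReal) d t ∧
      ENNReal.ofReal (2⁻¹ * metricSpeed y t ^ 2) + 2⁻¹ * descSlope f (y t) ^ 2
        ≤ ENNReal.ofReal (-d)

end KNPaper

lemma KNaux.convexOn_sinh' : ConvexOn ℝ (Set.Ici 0) Real.sinh := by
  apply convexOn_of_deriv2_nonneg (convex_Ici 0) Real.continuous_sinh.continuousOn
    Real.differentiable_sinh.differentiableOn
  · rw [Real.deriv_sinh]; exact Real.differentiable_cosh.differentiableOn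
  · intro x hx
    rw [interior_Ici, Set.mem_Ioi] at hx
    simp only [Function.iterate_succ, Function.iterate_zero, Function.comp_apply, id]
    rw [Real.deriv_sinh, Real.deriv_cosh]
    exact le_of_lt (Real.sinh_pos_iff.mpr hx)

lemma KNaux.sinh_mul_le {t x : ℝ} (ht0 : 0 ≤ t) (ht1 : t ≤ 1) (hx : 0 ≤ x) :
    Real.sinh (t * x) ≤ t * Real.sinh x := by
  have := KNaux.convexOn_sinh'.2 (Set.self_mem_Ici (a := (0:ℝ))) hx
    (by linarith : (0:ℝ) ≤ 1 - t) ht0 (by ring)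
  simpa [Real.sinh_zero] using this

lemma KNaux.sigma_le {K N t θ : ℝ} (hK : 0 ≤ K) (hN : N < 0) (ht0 : 0 ≤ t) (ht1 : t ≤ 1)
    (hθ : 0 ≤ θ) : KNPaper.sigmaKN K N t θ ≤ ENNReal.ofReal t := by
  have hKθ : 0 ≤ K * θ ^ 2 := mul_nonneg hK (sq_nonneg θ)
  unfold KNPaper.sigmaKN
  rcases eq_or_lt_of_le hKθ with h0 | hpos
  · rw [if_neg, if_pos h0.symm]
    rintro (⟨_, h⟩ | h) <;> linarith
  · rw [if_pos (Or.inr hpos)]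
    apply ENNReal.ofReal_le_ofReal
    have hKpos : 0 < K := by nlinarith [sq_nonneg θ]
    have hθpos : 0 < θ := by
      rcases eq_or_lt_of_le hθ with h | h
      · exfalso; rw [← h] at hpos; simp at hpos
      · exact h
    have hdiv : 0 < -K / N := by
      rw [div_pos_iff]; right; constructor <;> linarith
    set a := Real.sqrt (-K / N) with ha_def
    have ha : 0 < a := Real.sqrt_pos.2 hdiv
    simp only [KNPaper.sKN, if_neg (not_lt.2 hK), if_neg hKpos.ne']
    have hs : 0 < Real.sinh (θ * a) := Real.sinh_pos_iff.2 (by positivity)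
    have key : Real.sinh (t * θ * a) ≤ t * Real.sinh (θ * a) := by
      have := KNaux.sinh_mul_le ht0 ht1 (mul_nonneg hθ ha.le)
      rwa [← mul_assoc] at this
    have heq : Real.sinh (t * θ * a) / a / (Real.sinh (θ * a) / a)
        = Real.sinh (t * θ * a) / Real.sinh (θ * a) := by
      field_simp
    rw [heq, div_le_iff₀ hs]
    exact key


theorem stmt_1 {X : Type*} [MetricSpace X] (f : X → EReal) (K N : ℝ) (hK : 0 ≤ K)
    (hN : N < 0) (hf : KNPaper.KNConvex f K N) :
    ∀ x₀ x₁ : X, KNPaper.fN f N x₀ ≠ ⊤ → KNPaper.fN f N x₁ ≠ ⊤ →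
      ∃ γ : ℝ → X, KNPaper.IsGeodesic γ ∧ γ 0 = x₀ ∧ γ 1 = x₁ ∧
        ∀ t ∈ Set.Icc (0:ℝ) 1,
          KNPaper.fN f N (γ t) ≤ ENNReal.ofReal (1 - t) * KNPaper.fN f N x₀
            + ENNReal.ofReal t * KNPaper.fN f N x₁ := by
  intro x₀ x₁ h0 h1
  have hpos : (0:ℝ) < -1 / N := by
    rw [div_pos_iff]; right; constructor <;> [norm_num; exact hN]
  have hft : ∀ x : X, KNPaper.fN f N x ≠ ⊤ → f x ≠ ⊤ := by
    intro x hx hfx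
    apply hx
    rw [KNPaper.fN, hfx, EReal.coe_mul_top_of_pos hpos]
    simp [KNPaper.eexp]
  obtain ⟨γ, hgeo, -, hγ0, hγ1, hle⟩ := hf x₀ (Set.mem_univ _) x₁ (Set.mem_univ _)
    (hft _ h0) (hft _ h1) (fun h => absurd h (not_lt.2 hK))
  refine ⟨γ, hgeo, hγ0, hγ1, fun t ht => (hle t ht).trans ?_⟩
  exact add_le_add
    (mul_le_mul_left (KNaux.sigma_le hK hN (by linarith [ht.2]) (by linarith [ht.1])
      dist_nonneg) _)
    (mul_le_mul_left (KNaux.sigma_le hK hN ht.1 ht.2 dist_nonneg) _)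
end
end

section
/- Let (X, d) be a metric space, λ ∈ ℝ, and let g : X → [−∞,+∞] be lower semicontinuous and λ-convex. Let (z_t)_{t∈(0,T)}, T ∈ (0,+∞], be a continuous curve with values in D[g], and assume that for every t ∈ (0,T) there exists a neighborhood Z_t of z_t in X such that (d⁺/dt) ½·d(z_t, z)² + (λ/2)·d(z_t, z)² ≤ g(z) − g(z_t) holds for every z ∈ Z_t ∩ D[g]. Then (z_t)_{t∈(0,T)} is an EVI_λ gradient curve for g, i.e. the same inequality holds for every z ∈ D[g] and every t ∈ (0,T). -/
open Filter MeasureTheory Set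
open scoped ENNReal Topology

noncomputable section

section Helpers

open KNPaper

lemma ereal_mul_le_mul_left {c : ℝ} (hc : 0 < c) {x y : EReal} (h : x ≤ y) :
    (c : EReal) * x ≤ (c : EReal) * y := by
  induction x with
  | bot => simp [EReal.coe_mul_bot_of_pos hc]
  | coe a =>
    induction y with
    | bot => exact absurd h (by simp)
    | coe b =>
      rw [← EReal.coe_mul, ← EReal.coe_mul]
      exact EReal.coe_le_coe_iff.2
        (mul_le_mul_of_nonneg_left (EReal.coe_le_coe_iff.1 h) hc.le)
    | top => simp [EReal.coe_mul_top_of_pos hc]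
  | top =>
    rw [top_le_iff.1 h]

lemma ereal_mul_cancel_inv (c : ℝ) (hc : 0 < c) (x : EReal) :
    ((c⁻¹ : ℝ) : EReal) * ((c : ℝ) * x) = x := by
  rw [← mul_assoc, ← EReal.coe_mul, inv_mul_cancel₀ hc.ne', EReal.coe_one, one_mul]

/-- Multiplication by a positive real constant as an order isomorphism of `EReal`. -/
def erealMulIso (c : ℝ) (hc : 0 < c) : EReal ≃o EReal where
  toFun x := (c : EReal) * x
  invFun x := ((c⁻¹ : ℝ) : EReal) * x
  left_inv x := ereal_mul_cancel_inv c hc x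
  right_inv x := by
    show (c : EReal) * (((c⁻¹ : ℝ) : EReal) * x) = x
    rw [← mul_assoc, ← EReal.coe_mul, mul_inv_cancel₀ hc.ne', EReal.coe_one, one_mul]
  map_rel_iff' := by
    intro x y
    simp only [Equiv.coe_fn_mk]
    constructor
    · intro h
      have h2 := ereal_mul_le_mul_left (inv_pos.2 hc) h
      rwa [ereal_mul_cancel_inv c hc x, ereal_mul_cancel_inv c hc y] at h2
    · exact ereal_mul_le_mul_left hc

lemma limsup_const_mul_ereal (c : ℝ) (hc : 0 < c) (u : ℝ → EReal) (f : Filter ℝ) :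
    Filter.limsup (fun h => (c : EReal) * u h) f = (c : EReal) * Filter.limsup u f :=
  ((erealMulIso c hc).limsup_apply (u := u) (f := f)).symm

end Helpers

theorem stmt_3 {X : Type*} [MetricSpace X] (g : X → EReal) (lam : ℝ)
    (hlsc : LowerSemicontinuous g) (hconv : KNPaper.LambdaConvex g lam)
    (T : ℝ≥0∞) (hT : 0 < T) (z : ℝ → X)
    (hcont : ContinuousOn z (KNPaper.domT T))
    (hdom : ∀ t ∈ KNPaper.domT T, z t ∈ KNPaper.Dom g)
    (hloc : ∀ t ∈ KNPaper.domT T, ∃ Z ∈ 𝓝 (z t), ∀ x ∈ Z ∩ KNPaper.Dom g,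
      KNPaper.diniUR (fun s => dist (z s) x ^ 2 / 2) t
          + ((lam / 2 * dist (z t) x ^ 2 : ℝ) : EReal)
        ≤ (((g x).toReal - (g (z t)).toReal : ℝ) : EReal)) :
    KNPaper.IsEVIlam g lam T z := by
  classical
  refine ⟨hT, hcont, hdom, ?_⟩
  intro t ht x hx
  obtain ⟨Z, hZnhds, hZ⟩ := hloc t ht
  rcases eq_or_ne (dist (z t) x) 0 with hd0 | hdne
  · have hxz : x = z t := (dist_eq_zero.1 hd0).symm
    exact hZ x ⟨hxz ▸ mem_of_mem_nhds hZnhds, hx⟩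
  · have hdpos : 0 < dist (z t) x := lt_of_le_of_ne dist_nonneg (Ne.symm hdne)
    set d := dist (z t) x with hdd
    have hzt : z t ∈ KNPaper.Dom g := hdom t ht
    obtain ⟨γ, hγ, hγ0, hγ1, hconvγ⟩ := hconv (z t) x hzt hx
    have hybot : (((g (z t)).toReal - 1 : ℝ) : EReal) < g (z t) := by
      conv_rhs => rw [← EReal.coe_toReal hzt.1 hzt.2]
      exact_mod_cast sub_one_lt _
    have hev := hlsc (z t) _ hybot
    have hW : Z ∩ {w | (((g (z t)).toReal - 1 : ℝ) : EReal) < g w} ∈ 𝓝 (z t) :=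
      Filter.inter_mem hZnhds hev
    obtain ⟨ε, hεpos, hball⟩ := Metric.mem_nhds_iff.1 hW
    set s : ℝ := min 2⁻¹ (ε / (2 * d)) with hs
    have hspos : 0 < s := lt_min (by norm_num) (div_pos hεpos (by positivity))
    have hs1 : s ≤ 1 := le_trans (min_le_left _ _) (by norm_num)
    have hsIcc : s ∈ Set.Icc (0:ℝ) 1 := ⟨hspos.le, hs1⟩
    have h0Icc : (0:ℝ) ∈ Set.Icc (0:ℝ) 1 := ⟨le_refl 0, by norm_num⟩
    have h1Icc : (1:ℝ) ∈ Set.Icc (0:ℝ) 1 := ⟨by norm_num, le_refl 1⟩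
    have hdγ : dist (γ 0) (γ 1) = d := by rw [hγ0, hγ1]
    have hds : dist (z t) (γ s) = s * d := by
      have h := hγ 0 h0Icc s hsIcc
      rw [hγ0, hγ1, sub_zero, abs_of_pos hspos] at h
      rw [h, ← hdd]
    have hdsx : dist (γ s) x = (1 - s) * d := by
      have h := hγ s hsIcc 1 h1Icc
      rw [hγ0, hγ1] at h
      rw [h, abs_of_nonneg (by linarith : (0:ℝ) ≤ 1 - s), ← hdd]
    have hγsball : γ s ∈ Metric.ball (z t) ε := by
      rw [Metric.mem_ball, dist_comm, hds]
      have h1 : s * d ≤ (ε / (2 * d)) * d :=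
        mul_le_mul_of_nonneg_right (min_le_right _ _) hdpos.le
      have h2 : (ε / (2 * d)) * d = ε / 2 := by field_simp
      linarith
    have hγsW := hball hγsball
    have hγs_bound := hconvγ s hsIcc
    have hγs_ne_top : g (γ s) ≠ ⊤ := ne_top_of_le_ne_top (EReal.coe_ne_top _) hγs_bound
    have hγs_ne_bot : g (γ s) ≠ ⊥ := by
      intro hb
      have h3 := hγsW.2
      rw [Set.mem_setOf_eq, hb] at h3
      exact not_lt_bot h3
    have hγsdom : γ s ∈ KNPaper.Dom g := ⟨hγs_ne_top, hγs_ne_bot⟩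
    have key := hZ (γ s) ⟨hγsW.1, hγsdom⟩
    set g0 := (g (z t)).toReal with hg0
    set g1 := (g x).toReal with hg1
    set gs := (g (γ s)).toReal with hgs
    set A := KNPaper.diniUR (fun r => dist (z r) (γ s) ^ 2 / 2) t with hA
    have keyA : A ≤ ((gs - g0 - lam / 2 * (s * d) ^ 2 : ℝ) : EReal) := by
      have h1 : A + ((lam / 2 * (s * d) ^ 2 : ℝ) : EReal) ≤ ((gs - g0 : ℝ) : EReal) := by
        have := key
        rw [hds] at this
        exact this
      have h2 := (EReal.le_sub_iff_add_le (Or.inl (EReal.coe_ne_bot _))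
        (Or.inl (EReal.coe_ne_top _))).2 h1
      rwa [← EReal.coe_sub] at h2
    have hquot : ∀ h : ℝ, 0 < h →
        ((dist (z (t + h)) x ^ 2 / 2 - dist (z t) x ^ 2 / 2) / h : ℝ)
          ≤ (1 / s) * ((dist (z (t + h)) (γ s) ^ 2 / 2 - dist (z t) (γ s) ^ 2 / 2) / h) := by
      intro h hh
      have htri : dist (z (t + h)) x ≤ dist (z (t + h)) (γ s) + (1 - s) * d := by
        rw [← hdsx]; exact dist_triangle _ _ _
      set a := dist (z (t + h)) (γ s) with ha
      set e := dist (z (t + h)) x with he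
      have ha0 : 0 ≤ a := dist_nonneg
      have he0 : 0 ≤ e := dist_nonneg
      rw [hds, ← hdd]
      have hsq : e ^ 2 ≤ (a + (1 - s) * d) ^ 2 := pow_le_pow_left₀ he0 htri 2
      have hmain : s * (e ^ 2 / 2 - d ^ 2 / 2) ≤ a ^ 2 / 2 - (s * d) ^ 2 / 2 := by
        nlinarith [mul_le_mul_of_nonneg_left hsq hspos.le,
          mul_nonneg (sub_nonneg.2 hs1) (sq_nonneg (a - s * d))]
      have h1 : (e ^ 2 / 2 - d ^ 2 / 2) ≤ (a ^ 2 / 2 - (s * d) ^ 2 / 2) / s :=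
        (le_div_iff₀ hspos).2 (by linarith [hmain, mul_comm s (e ^ 2 / 2 - d ^ 2 / 2)])
      have h2 : (e ^ 2 / 2 - d ^ 2 / 2) / h ≤ ((a ^ 2 / 2 - (s * d) ^ 2 / 2) / s) / h := by
        gcongr
      calc (e ^ 2 / 2 - d ^ 2 / 2) / h ≤ ((a ^ 2 / 2 - (s * d) ^ 2 / 2) / s) / h := h2
        _ = (1 / s) * ((a ^ 2 / 2 - (s * d) ^ 2 / 2) / h) := by ring
    have hsinv : (0:ℝ) < 1 / s := by positivity
    have hDle : KNPaper.diniUR (fun r => dist (z r) x ^ 2 / 2) t ≤ ((1 / s : ℝ) : EReal) * A := by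
      rw [hA, KNPaper.diniUR, KNPaper.diniUR,
        ← limsup_const_mul_ereal (1 / s) hsinv _ (𝓝[>] (0:ℝ))]
      exact Filter.limsup_le_limsup (by
        filter_upwards [self_mem_nhdsWithin] with h hh
        rw [← EReal.coe_mul]
        exact EReal.coe_le_coe_iff.2 (hquot h hh))
    have hgs_le : gs ≤ (1 - s) * g0 + s * g1 - lam / 2 * (s * (1 - s)) * d ^ 2 := by
      have h4 := EReal.toReal_le_toReal hγs_bound hγs_ne_bot (EReal.coe_ne_top _)
      rw [EReal.toReal_coe] at h4
      rwa [← hdd] at h4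
    have hfinal : (1 / s) * (gs - g0 - lam / 2 * (s * d) ^ 2) + lam / 2 * d ^ 2 ≤ g1 - g0 := by
      have h3 : gs - g0 - lam / 2 * (s * d) ^ 2 ≤ s * ((g1 - g0) - lam / 2 * d ^ 2) := by
        nlinarith [hgs_le]
      have h5 := mul_le_mul_of_nonneg_left h3 hsinv.le
      have h6 : (1 / s) * (s * ((g1 - g0) - lam / 2 * d ^ 2)) = (g1 - g0) - lam / 2 * d ^ 2 := by
        field_simp
      linarith
    calc KNPaper.diniUR (fun r => dist (z r) x ^ 2 / 2) t
          + ((lam / 2 * dist (z t) x ^ 2 : ℝ) : EReal)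
        ≤ ((1 / s : ℝ) : EReal) * A + ((lam / 2 * d ^ 2 : ℝ) : EReal) := by
          rw [← hdd]; exact add_le_add_left hDle _
      _ ≤ ((1 / s : ℝ) : EReal) * ((gs - g0 - lam / 2 * (s * d) ^ 2 : ℝ) : EReal)
            + ((lam / 2 * d ^ 2 : ℝ) : EReal) :=
          add_le_add_left (ereal_mul_le_mul_left hsinv keyA) _
      _ = (((1 / s) * (gs - g0 - lam / 2 * (s * d) ^ 2) + lam / 2 * d ^ 2 : ℝ) : EReal) := by
          rw [← EReal.coe_mul, ← EReal.coe_add]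
      _ ≤ ((g1 - g0 : ℝ) : EReal) := EReal.coe_le_coe_iff.2 hfinal
end
end

section
/- Let (X, d) be a metric space, f : X → [−∞,+∞] lower semicontinuous, K ∈ ℝ and N < 0. If (y_t)_{t∈(0,T)} is an EVI_{K,N} gradient curve for f, then the function (0,T) ∋ t ↦ f(y_t) is non-increasing. -/
open Filter MeasureTheory Set
open scoped ENNReal Topology

noncomputable section

namespace KNPaper

lemma mem_domT_of_mem_Icc {T : ℝ≥0∞} {u v r : ℝ} (hu : u ∈ domT T) (hv : v ∈ domT T)
    (hr : r ∈ Set.Icc u v) : r ∈ domT T :=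
  ⟨lt_of_lt_of_le hu.1 hr.1, lt_of_le_of_lt (ENNReal.ofReal_le_ofReal hr.2) hv.2⟩

lemma sKN_zero (K N : ℝ) : sKN K N 0 = 0 := by
  unfold sKN
  rcases lt_trichotomy K 0 with h | h | h
  · simp [h]
  · simp [h]
  · simp [not_lt.2 h.le, h.ne']

lemma continuous_sKN (K N : ℝ) : Continuous (sKN K N) := by
  unfold sKN
  rcases lt_trichotomy K 0 with h | h | h
  · simp only [if_pos h]
    exact (Real.continuous_sin.comp (continuous_id.mul continuous_const)).div_const _
  · simp only [h, lt_irrefl, if_false, if_true]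
    exact continuous_id
  · simp only [if_neg (not_lt.2 h.le), if_neg h.ne']
    exact (Real.continuous_sinh.comp (continuous_id.mul continuous_const)).div_const _

lemma dist_eq_zero_of_sKN {K N d : ℝ} (hN : N < 0) (hd : 0 ≤ d)
    (hguard : K < 0 → d < Real.pi * Real.sqrt (N / K))
    (h : sKN K N (d / 2) = 0) : d = 0 := by
  unfold sKN at h
  rcases lt_trichotomy K 0 with hK | hK | hK
  · rw [if_pos hK] at h
    have hKN : 0 < K / N := div_pos_of_neg_of_neg hK hN
    have hs : 0 < Real.sqrt (K / N) := Real.sqrt_pos.2 hKN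
    have hsin : Real.sin (d / 2 * Real.sqrt (K / N)) = 0 := by
      rcases div_eq_zero_iff.1 h with h' | h'
      · exact h'
      · exact absurd h' hs.ne'
    have h2 : Real.sqrt (N / K) * Real.sqrt (K / N) = 1 := by
      rw [← Real.sqrt_mul (div_pos_of_neg_of_neg hN hK).le (K / N),
        show N / K * (K / N) = 1 by
          rw [div_mul_div_comm, mul_comm N K]
          exact div_self (mul_ne_zero hK.ne hN.ne)]
      exact Real.sqrt_one
    have hlt : d / 2 * Real.sqrt (K / N) < Real.pi := by
      have h1 := hguard hK
      have h3 : d * Real.sqrt (K / N) < Real.pi * (Real.sqrt (N / K) * Real.sqrt (K / N)) := by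
        rw [← mul_assoc]
        exact mul_lt_mul_of_pos_right h1 hs
      rw [h2, mul_one] at h3
      nlinarith [Real.pi_pos, mul_nonneg hd hs.le]
    have hge : 0 ≤ d / 2 * Real.sqrt (K / N) := by positivity
    have h4 := (Real.sin_eq_zero_iff_of_lt_of_lt (by linarith [Real.pi_pos]) hlt).1 hsin
    rcases mul_eq_zero.1 h4 with h' | h'
    · linarith
    · exact absurd h' hs.ne'
  · rw [if_neg (by simp [hK]), if_pos hK] at h
    linarith
  · rw [if_neg (not_lt.2 hK.le), if_neg hK.ne'] at h
    have hKN : 0 < -K / N := div_pos_of_neg_of_neg (by linarith) hN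
    have hs : 0 < Real.sqrt (-K / N) := Real.sqrt_pos.2 hKN
    have hsinh : Real.sinh (d / 2 * Real.sqrt (-K / N)) = 0 := by
      rcases div_eq_zero_iff.1 h with h' | h'
      · exact h'
      · exact absurd h' hs.ne'
    rcases mul_eq_zero.1 (Real.sinh_eq_zero.1 hsinh) with h' | h'
    · linarith
    · exact absurd h' hs.ne'

lemma eexp_coe (t : ℝ) : eexp (t : EReal) = ENNReal.ofReal (Real.exp t) := by
  rw [eexp, if_neg (EReal.coe_ne_top t), if_neg (EReal.coe_ne_bot t), EReal.toReal_coe]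

lemma fN_eq {X : Type*} [MetricSpace X] {f : X → EReal} (N : ℝ) {x : X} (hx : x ∈ Dom f) :
    fN f N x = ENNReal.ofReal (Real.exp (-1 / N * (f x).toReal)) := by
  obtain ⟨t, ht⟩ : ∃ t : ℝ, f x = (t : EReal) := ⟨(f x).toReal, (EReal.coe_toReal hx.1 hx.2).symm⟩
  rw [fN, ht, ← EReal.coe_mul, eexp_coe, EReal.toReal_coe]

lemma dini_le_of_add_le {A : EReal} {c m : ℝ} (h : A + (c : EReal) ≤ (m : EReal)) :
    A ≤ ((m - c : ℝ) : EReal) := by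
  induction A with
  | bot => exact bot_le
  | coe t =>
    rw [← EReal.coe_add, EReal.coe_le_coe_iff] at h
    exact EReal.coe_le_coe_iff.2 (by linarith)
  | top =>
    rw [EReal.top_add_coe] at h
    exact absurd h (by simp)

/-- Gronwall-type lemma from a Dini derivative bound with zero initial condition. -/
lemma gronwall_zero {g : ℝ → ℝ} {a b L : ℝ} (hL : 0 ≤ L)
    (hcont : ContinuousOn g (Set.Icc a b)) (hga : g a = 0)
    (hdini : ∀ x ∈ Set.Ico a b, diniUR g x ≤ ((L * g x : ℝ) : EReal)) :
    ∀ x ∈ Set.Icc a b, g x ≤ 0 := by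
  have key : ∀ ε > (0:ℝ), ∀ x ∈ Set.Icc a b, g x ≤ ε * Real.exp ((L + 1) * (x - a)) := by
    intro ε hε
    have hB : ∀ x : ℝ, HasDerivAt (fun x => ε * Real.exp ((L + 1) * (x - a)))
        (ε * (Real.exp ((L + 1) * (x - a)) * ((L + 1) * 1))) x := by
      intro x
      exact (((hasDerivAt_id x).sub_const a).const_mul (L + 1)).exp.const_mul ε
    have hf' : ∀ x ∈ Set.Ico a b, ∀ r, L * g x < r → ∃ᶠ z in 𝓝[>] x, slope g x z < r := by
      intro x hx r hr
      have h1 : diniUR g x < (r : EReal) :=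
        lt_of_le_of_lt (hdini x hx) (EReal.coe_lt_coe_iff.2 hr)
      have h2 : ∀ᶠ h in 𝓝[>] (0:ℝ), (((g (x + h) - g x) / h : ℝ) : EReal) < (r : EReal) :=
        eventually_lt_of_limsup_lt h1
      have hmap : Tendsto (fun z : ℝ => z - x) (𝓝[>] x) (𝓝[>] (0:ℝ)) := by
        rw [tendsto_nhdsWithin_iff]
        constructor
        · have h5 : Tendsto (fun z : ℝ => z - x) (𝓝 x) (𝓝 (x - x)) :=
            (continuous_id.sub continuous_const).tendsto x
          rw [sub_self] at h5
          exact h5.mono_left nhdsWithin_le_nhds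
        · filter_upwards [self_mem_nhdsWithin] with z hz
          exact sub_pos.2 (Set.mem_Ioi.1 hz)
      have h3 := hmap.eventually h2
      refine (h3.mono ?_).frequently
      intro z hz
      rw [slope_def_field]
      have hxz : x + (z - x) = z := by ring
      rw [hxz] at hz
      exact EReal.coe_lt_coe_iff.1 hz
    have hkey := image_le_of_liminf_slope_right_lt_deriv_boundary hcont hf'
      (B := fun x => ε * Real.exp ((L + 1) * (x - a)))
      (B' := fun x => ε * (Real.exp ((L + 1) * (x - a)) * ((L + 1) * 1)))
      (by
        show g a ≤ ε * Real.exp ((L + 1) * (a - a))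
        rw [sub_self, mul_zero, Real.exp_zero, mul_one, hga]
        exact hε.le)
      hB
      (by
        intro x hx heq
        show L * g x < ε * (Real.exp ((L + 1) * (x - a)) * ((L + 1) * 1))
        rw [show g x = ε * Real.exp ((L + 1) * (x - a)) from heq]
        have hexp : 0 < Real.exp ((L + 1) * (x - a)) := Real.exp_pos _
        nlinarith [mul_pos hε hexp])
    exact fun x hx => hkey hx
  intro x hx
  by_contra hpos
  push_neg at hpos
  set E := Real.exp ((L + 1) * (x - a)) with hE
  have hEpos : 0 < E := Real.exp_pos _
  have h6 := key (g x / (2 * E)) (by positivity) x hx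
  have h7 : g x / (2 * E) * E = g x / 2 := by field_simp
  rw [h7] at h6
  linarith

lemma core_step {X : Type*} [MetricSpace X] {f : X → EReal} (hlsc : LowerSemicontinuous f)
    {K N : ℝ} (hN : N < 0) {T : ℝ≥0∞} {y : ℝ → X} (hy : IsEVIKN f K N T y) {u v : ℝ}
    (hu : u ∈ domT T) (hv : v ∈ domT T) (huv : u ≤ v)
    (hguard : K < 0 → ∀ r ∈ Set.Icc u v, dist (y r) (y u) < Real.pi * Real.sqrt (N / K) / 2) :
    f (y v) ≤ f (y u) := by
  obtain ⟨hT, hcont, hdomf, hEVI⟩ := hy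
  by_contra hcon
  have hlt : f (y u) < f (y v) := not_le.1 hcon
  have hsubIcc : Set.Icc u v ⊆ domT T := fun r hr => mem_domT_of_mem_Icc hu hv hr
  have hud : y u ∈ Dom f := hdomf u hu
  have hvd : y v ∈ Dom f := hdomf v hv
  set a := (f (y u)).toReal with ha
  set b := (f (y v)).toReal with hb
  have hfu : f (y u) = (a : EReal) := (EReal.coe_toReal hud.1 hud.2).symm
  have hfv : f (y v) = (b : EReal) := (EReal.coe_toReal hvd.1 hvd.2).symm
  have hab : a < b := by
    rw [hfu, hfv] at hlt
    exact EReal.coe_lt_coe_iff.1 hlt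
  set c := (a + b) / 2 with hc
  have hac : a ≤ c := by rw [hc]; linarith
  have hcb : c < b := by rw [hc]; linarith
  set S := {r : ℝ | r ∈ Set.Icc u v ∧ f (y r) ≤ (c : EReal)} with hS
  have hSu : u ∈ S := ⟨⟨le_refl u, huv⟩, by rw [hfu]; exact EReal.coe_le_coe_iff.2 hac⟩
  have hSne : S.Nonempty := ⟨u, hSu⟩
  have hSbdd : BddAbove S := ⟨v, fun r hr => hr.1.2⟩
  set w := sSup S with hw
  have hwmem : w ∈ Set.Icc u v :=
    ⟨le_csSup hSbdd hSu, csSup_le hSne fun r hr => hr.1.2⟩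
  have hwdom : w ∈ domT T := hsubIcc hwmem
  have hwd : y w ∈ Dom f := hdomf w hwdom
  have hfw : f (y w) ≤ (c : EReal) := by
    by_contra hgt
    push_neg at hgt
    have hev : ∀ᶠ z in 𝓝 (y w), (c : EReal) < f z := hlsc (y w) (c : EReal) hgt
    have hten : Tendsto y (𝓝[S] w) (𝓝 (y w)) :=
      (hcont w hwdom).mono_left (nhdsWithin_mono w fun r hr => hsubIcc hr.1)
    have hne : (𝓝[S] w).NeBot :=
      mem_closure_iff_nhdsWithin_neBot.1 ((isLUB_csSup hSne hSbdd).mem_closure hSne)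
    obtain ⟨r, hr1, hr2⟩ := ((hten.eventually hev).and self_mem_nhdsWithin).exists
    exact absurd hr2.2 (not_le.2 hr1)
  have hwv : w < v := by
    rcases lt_or_eq_of_le hwmem.2 with h | h
    · exact h
    · exfalso
      rw [h, hfv] at hfw
      exact absurd (EReal.coe_le_coe_iff.1 hfw) (not_le.2 hcb)
  -- distance guard relative to `y w`
  have hdistw : ∀ r ∈ Set.Icc u v, K < 0 → dist (y r) (y w) < Real.pi * Real.sqrt (N / K) := by
    intro r hr hK
    have h1 := hguard hK r hr
    have h2 := hguard hK w hwmem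
    have h3 : dist (y r) (y w) ≤ dist (y u) (y r) + dist (y u) (y w) := dist_triangle_left _ _ _
    rw [dist_comm (y u) (y r), dist_comm (y u) (y w)] at h3
    linarith
  -- Dini derivative bound
  have hdini : ∀ r ∈ Set.Ico w v,
      diniUR (fun s => sKN K N (dist (y s) (y w) / 2) ^ 2) r
        ≤ ((|K| * sKN K N (dist (y r) (y w) / 2) ^ 2 : ℝ) : EReal) := by
    intro r hr
    have hrIcc : r ∈ Set.Icc u v := ⟨hwmem.1.trans hr.1, hr.2.le⟩
    have hrdom : r ∈ domT T := hsubIcc hrIcc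
    have hrd : y r ∈ Dom f := hdomf r hrdom
    have hEVIr := hEVI r hrdom (y w) (subset_closure hwd) (fun hK => hdistw r hrIcc hK)
    have htr : (f (y w)).toReal ≤ (f (y r)).toReal := by
      rcases eq_or_lt_of_le hr.1 with h | h
      · rw [← h]
      · have hrnS : r ∉ S := fun hrS => absurd (le_csSup hSbdd hrS) (not_le.2 h)
        have hgt : (c : EReal) < f (y r) := by
          by_contra hle
          exact hrnS ⟨hrIcc, not_lt.1 hle⟩
        have h1 : (f (y w)).toReal ≤ c := EReal.toReal_le_toReal hfw hwd.2 (EReal.coe_ne_top c)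
        have h2 : c ≤ (f (y r)).toReal := by
          rw [← EReal.coe_toReal hrd.1 hrd.2] at hgt
          exact (EReal.coe_lt_coe_iff.1 hgt).le
        linarith
    set e₁ := Real.exp (-1 / N * (f (y w)).toReal) with he₁
    set e₂ := Real.exp (-1 / N * (f (y r)).toReal) with he₂
    have h12 : e₁ ≤ e₂ := by
      apply Real.exp_le_exp.2
      have hpos : (0:ℝ) ≤ -1 / N := (div_pos_of_neg_of_neg (by norm_num) hN).le
      exact mul_le_mul_of_nonneg_left htr hpos
    have hratio : (fN f N (y w) / fN f N (y r) : ℝ≥0∞) = ENNReal.ofReal (e₁ / e₂) := by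
      rw [fN_eq N hwd, fN_eq N hrd, ← ENNReal.ofReal_div_of_pos (Real.exp_pos _)]
    rw [hratio] at hEVIr
    have hρ0 : (0:ℝ) ≤ e₁ / e₂ := by positivity
    have hρ1 : e₁ / e₂ ≤ 1 := div_le_one_of_le₀ h12 (Real.exp_pos _).le
    have hcoe : ((ENNReal.ofReal (e₁ / e₂) : ℝ≥0∞) : EReal) = ((e₁ / e₂ : ℝ) : EReal) := by
      rw [EReal.coe_ennreal_ofReal, max_eq_left hρ0]
    rw [hcoe] at hEVIr
    have hRHS : ((N / 2 : ℝ) : EReal) * (1 - ((e₁ / e₂ : ℝ) : EReal))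
        = ((N / 2 * (1 - e₁ / e₂) : ℝ) : EReal) := by
      rw [← EReal.coe_one, ← EReal.coe_sub, ← EReal.coe_mul]
    rw [hRHS] at hEVIr
    have hle2 := dini_le_of_add_le hEVIr
    refine hle2.trans (EReal.coe_le_coe_iff.2 ?_)
    have hg0 : (0:ℝ) ≤ sKN K N (dist (y r) (y w) / 2) ^ 2 := sq_nonneg _
    have hm : N / 2 * (1 - e₁ / e₂) ≤ 0 :=
      mul_nonpos_of_nonpos_of_nonneg (by linarith) (by linarith)
    have hKabs : -K * sKN K N (dist (y r) (y w) / 2) ^ 2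
        ≤ |K| * sKN K N (dist (y r) (y w) / 2) ^ 2 :=
      mul_le_mul_of_nonneg_right (neg_le_abs K) hg0
    linarith
  -- Gronwall on [w, v]
  have hsub2 : Set.Icc w v ⊆ domT T := fun r hr => hsubIcc ⟨hwmem.1.trans hr.1, hr.2⟩
  have h1c : ContinuousOn (fun s => dist (y s) (y w) / 2) (Set.Icc w v) :=
    (((continuous_id.dist continuous_const).comp_continuousOn (hcont.mono hsub2))).div_const 2
  have hgc : ContinuousOn (fun s => sKN K N (dist (y s) (y w) / 2) ^ 2) (Set.Icc w v) :=
    ((continuous_sKN K N).comp_continuousOn h1c).pow 2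
  have hga0 : sKN K N (dist (y w) (y w) / 2) ^ 2 = 0 := by
    simp [sKN_zero]
  have hzero := gronwall_zero (abs_nonneg K) hgc hga0 hdini v ⟨hwv.le, le_refl v⟩
  have hgv : sKN K N (dist (y v) (y w) / 2) ^ 2 = 0 := le_antisymm hzero (sq_nonneg _)
  have hsKNv : sKN K N (dist (y v) (y w) / 2) = 0 :=
    pow_eq_zero_iff (two_ne_zero) |>.1 hgv
  have hdv : dist (y v) (y w) = 0 :=
    dist_eq_zero_of_sKN hN dist_nonneg (fun hK => hdistw v ⟨huv, le_refl v⟩ hK) hsKNv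
  have heq : y v = y w := dist_eq_zero.1 hdv
  have hfvc : f (y v) ≤ (c : EReal) := by rw [heq]; exact hfw
  rw [hfv] at hfvc
  exact absurd (EReal.coe_le_coe_iff.1 hfvc) (not_le.2 hcb)

end KNPaper

theorem stmt_4 {X : Type*} [MetricSpace X] (f : X → EReal) (hlsc : LowerSemicontinuous f)
    (K N : ℝ) (hN : N < 0) (T : ℝ≥0∞) (y : ℝ → X)
    (hy : KNPaper.IsEVIKN f K N T y) :
    ∀ s ∈ KNPaper.domT T, ∀ t ∈ KNPaper.domT T, s ≤ t → f (y t) ≤ f (y s) := by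
  intro s hs t ht hst
  by_cases hK : K < 0
  · -- uniform continuity on [s, t]
    have hR : 0 < Real.pi * Real.sqrt (N / K) :=
      mul_pos Real.pi_pos (Real.sqrt_pos.2 (div_pos_of_neg_of_neg hN hK))
    set R := Real.pi * Real.sqrt (N / K) with hRdef
    have hsubIcc : Set.Icc s t ⊆ KNPaper.domT T :=
      fun r hr => KNPaper.mem_domT_of_mem_Icc hs ht hr
    have hyc : ContinuousOn y (Set.Icc s t) := hy.2.1.mono hsubIcc
    have hunif := (isCompact_Icc).uniformContinuousOn_of_continuous hyc
    rw [Metric.uniformContinuousOn_iff] at hunif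
    obtain ⟨δ, hδ, hδ2⟩ := hunif (R / 2) (by positivity)
    have claim : ∀ n : ℕ, ∀ u v : ℝ, u ∈ Set.Icc s t → v ∈ Set.Icc s t → u ≤ v →
        v - u ≤ n * (δ / 2) → f (y v) ≤ f (y u) := by
      intro n
      induction n with
      | zero =>
        intro u v hu hv huv hle
        have : v = u := le_antisymm (by push_cast at hle; linarith) huv
        rw [this]
      | succ n ih =>
        intro u v hu hv huv hle
        by_cases hsmall : v - u ≤ δ / 2
        · refine KNPaper.core_step hlsc hN hy (hsubIcc hu) (hsubIcc hv) huv ?_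
          intro _ r hr
          have hrst : r ∈ Set.Icc s t := ⟨hu.1.trans hr.1, hr.2.trans hv.2⟩
          apply hδ2 r hrst u hu
          rw [Real.dist_eq, abs_of_nonneg (by linarith [hr.1])]
          linarith [hr.2]
        · push_neg at hsmall
          have hwIcc : v - δ / 2 ∈ Set.Icc s t :=
            ⟨le_trans hu.1 (by linarith), by linarith [hv.2]⟩
          have h1 : f (y v) ≤ f (y (v - δ / 2)) := by
            refine KNPaper.core_step hlsc hN hy (hsubIcc hwIcc) (hsubIcc hv) (by linarith) ?_
            intro _ r hr
            have hrst : r ∈ Set.Icc s t := ⟨hwIcc.1.trans hr.1, hr.2.trans hv.2⟩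
            apply hδ2 r hrst (v - δ / 2) hwIcc
            rw [Real.dist_eq, abs_of_nonneg (by linarith [hr.1])]
            linarith [hr.2]
          have h2 : f (y (v - δ / 2)) ≤ f (y u) := by
            apply ih u (v - δ / 2) hu hwIcc (by linarith)
            push_cast at hle ⊢
            linarith
          exact h1.trans h2
    obtain ⟨n, hn⟩ := exists_nat_ge ((t - s) / (δ / 2))
    refine claim n s t ⟨le_refl s, hst⟩ ⟨hst, le_refl t⟩ hst ?_
    rw [div_le_iff₀ (by linarith)] at hn
    linarith
  · exact KNPaper.core_step hlsc hN hy hs ht hst (fun h => absurd h hK)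
end
end

section
/- Let (X, d) be a metric space, N < 0, and f : X → [−∞,+∞] lower semicontinuous with D[f] ≠ ∅. Then ℛ₁ maps 𝒞′ into 𝒞″_N, ℛ₂ maps 𝒞″_N into 𝒞′, and the two maps are mutually inverse: ℛ₂ ∘ ℛ₁ = id on 𝒞′ and ℛ₁ ∘ ℛ₂ = id on 𝒞″_N. -/
open Filter MeasureTheory Set
open scoped ENNReal Topology

noncomputable section

namespace KNPaper

variable {X : Type*} [MetricSpace X]

section domTlemmas
variable {T : ℝ≥0∞} {s t : ℝ}
theorem mem_domT : t ∈ domT T ↔ 0 < t ∧ ENNReal.ofReal t < T := Iff.rfl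
theorem domT_mem_of_le (ht : t ∈ domT T) (hs : 0 < s) (hst : s ≤ t) : s ∈ domT T :=
  ⟨hs, lt_of_le_of_lt (ENNReal.ofReal_le_ofReal hst) ht.2⟩
theorem domT_ordConn (ht : t ∈ domT T) (hs : s ∈ domT T) : Set.Icc s t ⊆ domT T := fun x hx =>
  domT_mem_of_le ht (lt_of_lt_of_le hs.1 hx.1) hx.2
theorem Ioo_subset_domT (ht : t ∈ domT T) : Set.Ioo 0 t ⊆ domT T := fun x hx =>
  domT_mem_of_le ht hx.1 hx.2.le
theorem domT_exists_gt (ht : t ∈ domT T) : ∃ t' ∈ domT T, t < t' := by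
  obtain ⟨r, hr0, h1, h2⟩ := ENNReal.lt_iff_exists_real_btwn.1 ht.2
  have htr : t < r := by
    by_contra h
    exact absurd (ENNReal.ofReal_le_ofReal (not_lt.1 h)) (not_le.2 h1)
  exact ⟨r, ⟨lt_trans ht.1 htr, h2⟩, htr⟩
theorem domT_nonempty (hT : 0 < T) : ∃ t, t ∈ domT T := by
  obtain ⟨r, hr0, h1, h2⟩ := ENNReal.lt_iff_exists_real_btwn.1 hT
  have : 0 < r := by
    by_contra h
    rw [ENNReal.ofReal_eq_zero.2 (not_lt.1 h)] at h1
    exact absurd h1 (lt_irrefl _)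
  exact ⟨r, this, h2⟩
theorem measurableSet_domT : MeasurableSet (domT T) :=
  measurableSet_Ioi.inter (ENNReal.measurable_ofReal (measurableSet_Iio))
end domTlemmas

/-- Hypotheses for the reparametrization framework. -/
structure Rep (T : ℝ≥0∞) (u : ℝ → ℝ) : Prop where
  hT : 0 < T
  pos : ∀ t ∈ domT T, 0 < u t
  mono : MonotoneOn u (domT T) ∨ AntitoneOn u (domT T)
  integ : ∀ t ∈ domT T, IntegrableOn u (Set.Ioo 0 t) volume

/-- The primitive `A t = ∫_{(0,t)} u`. -/
def RA (u : ℝ → ℝ) (t : ℝ) : ℝ := ∫ r in Set.Ioo 0 t, u r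

/-- 1D lintegral change of variables. -/
theorem my_lintegral_cov {s : Set ℝ} {f f' : ℝ → ℝ} (hs : MeasurableSet s)
    (hf' : ∀ x ∈ s, HasDerivWithinAt f (f' x) s x) (hf : Set.InjOn f s) (g : ℝ → ℝ≥0∞) :
    ∫⁻ x in f '' s, g x = ∫⁻ x in s, ENNReal.ofReal |f' x| * g (f x) := by
  simpa only [ContinuousLinearMap.det_toSpanSingleton] using
    MeasureTheory.lintegral_image_eq_lintegral_abs_det_fderiv_mul volume hs
      (fun x hx => (hf' x hx).hasFDerivWithinAt) hf g

/-- The reparametrized final time. -/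
def RT (T : ℝ≥0∞) (u : ℝ → ℝ) : ℝ≥0∞ := ⨆ t ∈ domT T, ENNReal.ofReal (RA u t)

namespace Rep
variable {T : ℝ≥0∞} {u : ℝ → ℝ} (h : Rep T u)
include h

theorem nonneg_on {t : ℝ} (ht : t ∈ domT T) : ∀ x ∈ Set.Ioo (0:ℝ) t, 0 ≤ u x := fun x hx =>
  (h.pos x (Ioo_subset_domT ht hx)).le

theorem RA_nonneg {t : ℝ} (ht : t ∈ domT T) : 0 ≤ RA u t :=
  setIntegral_nonneg measurableSet_Ioo (h.nonneg_on ht)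

theorem integ_Ioo {a b : ℝ} (ha : 0 ≤ a) (hb : b ∈ domT T) :
    IntegrableOn u (Set.Ioo a b) volume :=
  (h.integ b hb).mono_set (fun x hx => ⟨lt_of_le_of_lt ha hx.1, hx.2⟩)

theorem RA_add {a b : ℝ} (ha : a ∈ domT T) (hb : b ∈ domT T) (hab : a ≤ b) :
    RA u b = RA u a + ∫ r in Set.Ioo a b, u r := by
  have hsplit : Set.Ioo (0:ℝ) a ∪ Set.Ico a b = Set.Ioo 0 b :=
    Set.Ioo_union_Ico_eq_Ioo ha.1 hab
  have hdisj : Disjoint (Set.Ioo (0:ℝ) a) (Set.Ico a b) := by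
    rw [Set.disjoint_left]
    rintro x ⟨_, hxa⟩ ⟨hax, _⟩
    exact absurd hax (not_le.2 hxa)
  rw [RA, RA, ← hsplit, MeasureTheory.setIntegral_union hdisj measurableSet_Ico
    ((h.integ a ha)) ((h.integ b hb).mono_set (fun x hx => ⟨lt_of_lt_of_le ha.1 hx.1, hx.2⟩)),
    MeasureTheory.integral_Ico_eq_integral_Ioo]

theorem int_Ioo_bounds {a b : ℝ} (ha : a ∈ domT T) (hb : b ∈ domT T) (hab : a ≤ b) :
    (b - a) * min (u a) (u b) ≤ ∫ r in Set.Ioo a b, u r ∧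
      ∫ r in Set.Ioo a b, u r ≤ (b - a) * max (u a) (u b) := by
  have hsub : Set.Ioo a b ⊆ domT T := fun x hx => domT_ordConn hb ha ⟨hx.1.le, hx.2.le⟩
  have hbd : ∀ x ∈ Set.Ioo a b, min (u a) (u b) ≤ u x ∧ u x ≤ max (u a) (u b) := by
    intro x hx
    have hx' := hsub hx
    rcases h.mono with hm | hm
    · exact ⟨le_trans (min_le_left _ _) (hm ha hx' hx.1.le),
        le_trans (hm hx' hb hx.2.le) (le_max_right _ _)⟩
    · exact ⟨le_trans (min_le_right _ _) (hm hx' hb hx.2.le),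
        le_trans (hm ha hx' hx.1.le) (le_max_left _ _)⟩
  have hint : IntegrableOn u (Set.Ioo a b) volume := h.integ_Ioo (lt_of_lt_of_le ha.1 le_rfl).le hb
  have hvol : (volume (Set.Ioo a b)).toReal = b - a := by
    rw [Real.volume_Ioo, ENNReal.toReal_ofReal (by linarith)]
  constructor
  · calc (b - a) * min (u a) (u b) = ∫ _ in Set.Ioo a b, min (u a) (u b) := by
          rw [setIntegral_const, measureReal_def, hvol, smul_eq_mul]
    _ ≤ ∫ r in Set.Ioo a b, u r := by
          apply setIntegral_mono_on (integrableOn_const (by simp [Real.volume_Ioo])) hint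
            measurableSet_Ioo (fun x hx => (hbd x hx).1)
  · calc ∫ r in Set.Ioo a b, u r ≤ ∫ _ in Set.Ioo a b, max (u a) (u b) := by
          apply setIntegral_mono_on hint (integrableOn_const (by simp [Real.volume_Ioo]))
            measurableSet_Ioo (fun x hx => (hbd x hx).2)
    _ = (b - a) * max (u a) (u b) := by rw [setIntegral_const, measureReal_def, hvol, smul_eq_mul]

theorem RA_strictMonoOn : StrictMonoOn (RA u) (domT T) := by
  intro a ha b hb hab
  have hmin : 0 < min (u a) (u b) := lt_min (h.pos a ha) (h.pos b hb)
  have := (h.int_Ioo_bounds ha hb hab.le).1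
  have : 0 < ∫ r in Set.Ioo a b, u r :=
    lt_of_lt_of_le (mul_pos (by linarith) hmin) this
  rw [h.RA_add ha hb hab.le]
  linarith

theorem RA_pos {t : ℝ} (ht : t ∈ domT T) : 0 < RA u t := by
  have h2 : t / 2 ∈ domT T := domT_mem_of_le ht (by linarith [ht.1]) (by linarith [ht.1])
  calc (0:ℝ) ≤ RA u (t/2) := h.RA_nonneg h2
  _ < RA u t := h.RA_strictMonoOn h2 ht (by linarith [ht.1])

theorem RA_monotoneOn : MonotoneOn (RA u) (domT T) := h.RA_strictMonoOn.monotoneOn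

theorem RA_injOn : Set.InjOn (RA u) (domT T) := h.RA_strictMonoOn.injOn

theorem continuousOn_Icc {t : ℝ} (ht : t ∈ domT T) : ContinuousOn (RA u) (Set.Icc 0 t) := by
  have hint : IntegrableOn u (Set.Icc 0 t) volume := by
    rw [integrableOn_Icc_iff_integrableOn_Ioo]
    exact h.integ t ht
  have := intervalIntegral.continuousOn_primitive (f := u) (a := 0) (b := t) (μ := volume) hint
  apply this.congr
  intro x hx
  show RA u x = ∫ t in Set.Ioc 0 x, u t
  rw [RA, ← MeasureTheory.integral_Ioc_eq_integral_Ioo]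

theorem RA_continuousOn : ContinuousOn (RA u) (domT T) := by
  intro x hx
  obtain ⟨t', ht', hxt'⟩ := domT_exists_gt hx
  have hsub : Set.Icc (0:ℝ) t' ∈ 𝓝[domT T] x := by
    apply Filter.mem_of_superset (inter_mem_nhdsWithin (domT T) (Iio_mem_nhds hxt'))
    rintro y ⟨hy1, hy2⟩
    exact ⟨(hy1.1).le, le_of_lt hy2⟩
  exact ((h.continuousOn_Icc ht') x ⟨hx.1.le, hxt'.le⟩).mono_of_mem_nhdsWithin hsub

theorem RA_tendsto_zero : Filter.Tendsto (RA u) (𝓝[>] (0:ℝ)) (𝓝 0) := by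
  obtain ⟨t₀, ht₀⟩ := domT_nonempty h.hT
  have hc : ContinuousWithinAt (RA u) (Set.Icc 0 t₀) 0 :=
    (h.continuousOn_Icc ht₀) 0 ⟨le_rfl, ht₀.1.le⟩
  have h0 : RA u 0 = 0 := by simp [RA]
  have : Filter.Tendsto (RA u) (𝓝[Set.Icc 0 t₀] (0:ℝ)) (𝓝 0) := by
    have := hc
    rw [ContinuousWithinAt, h0] at this
    exact this
  have hle : 𝓝[>] (0:ℝ) ≤ 𝓝[Set.Icc 0 t₀] (0:ℝ) := by
    rw [← nhdsWithin_Ioc_eq_nhdsGT ht₀.1]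
    exact nhdsWithin_mono _ Set.Ioc_subset_Icc_self
  exact this.mono_left hle


/-- The set of discontinuity points of `u` within `domT T`. -/
theorem countable_discont : Set.Countable {x ∈ domT T | ¬ContinuousWithinAt u (domT T) x} := by
  haveI : Set.OrdConnected (domT T) := ⟨fun _ hx _ hy => domT_ordConn hy hx⟩
  have key : Set.Countable {p : domT T | ¬ContinuousAt ((domT T).restrict u) p} := by
    rcases h.mono with hm | hm
    · have : Monotone ((domT T).restrict u) := fun a b hab => hm a.2 b.2 hab
      exact this.countable_not_continuousAt
    · have : Antitone ((domT T).restrict u) := fun a b hab => hm a.2 b.2 hab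
      exact this.countable_not_continuousAt
  have himg := key.image (Subtype.val)
  apply Set.Countable.mono _ himg
  rintro x ⟨hx, hcx⟩
  refine ⟨⟨x, hx⟩, ?_, rfl⟩
  simp only [Set.mem_setOf_eq]
  exact fun hc => hcx ((continuousWithinAt_iff_continuousAt_domRestrict u hx).2 hc)

theorem hasDerivWithinAt {s : Set ℝ} (hs : s ⊆ domT T) {x : ℝ} (hx : x ∈ s)
    (hcont : ContinuousWithinAt u s x) : HasDerivWithinAt (RA u) (u x) s x := by
  rw [hasDerivWithinAt_iff_tendsto_slope]
  have key : ∀ v ∈ s \ {x}, |slope (RA u) x v - u x| ≤ |u v - u x| := by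
    rintro v ⟨hv, hvx⟩
    have hvx' : v ≠ x := hvx
    have hbound : ∀ a b : ℝ, a ∈ domT T → b ∈ domT T → a < b →
        min (u a) (u b) ≤ (RA u b - RA u a) / (b - a) ∧
        (RA u b - RA u a) / (b - a) ≤ max (u a) (u b) := by
      intro a b ha hb hab
      have hint := h.int_Ioo_bounds ha hb hab.le
      rw [h.RA_add ha hb hab.le]
      have hba : 0 < b - a := by linarith
      constructor
      · rw [le_div_iff₀ hba]
        ring_nf
        ring_nf at hint ⊢
        nlinarith [hint.1]
      · rw [div_le_iff₀ hba]
        nlinarith [hint.2]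
    have habs : ∀ a b : ℝ, min a b ≤ u x → u x ≤ max a b →
        ∀ p, min a b ≤ p → p ≤ max a b → |p - u x| ≤ |b - a| := by
      intro a b h1 h2 p h3 h4
      rw [abs_le]
      rcases le_total a b with hab | hab
      · rw [min_eq_left hab] at h1 h3; rw [max_eq_right hab] at h2 h4
        rw [abs_of_nonneg (by linarith)]
        constructor <;> linarith
      · rw [min_eq_right hab] at h1 h3; rw [max_eq_left hab] at h2 h4
        rw [abs_of_nonpos (by linarith)]
        constructor <;> linarith
    rcases lt_or_gt_of_ne hvx' with hlt | hgt
    · -- v < x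
      have hb := hbound v x (hs hv) (hs hx) hlt
      have hslope : slope (RA u) x v = (RA u x - RA u v) / (x - v) := by
        rw [slope_def_field]
        rw [div_eq_div_iff (by intro hc; apply hvx'; linarith) (by intro hc; apply hvx'; linarith)]
        ring
      rw [hslope]
      have := habs (u v) (u x) (min_le_right _ _) (le_max_right _ _) _ hb.1 hb.2
      rw [abs_sub_comm (u v) (u x)]
      exact this
    · -- x < v
      have hb := hbound x v (hs hx) (hs hv) hgt
      have hslope : slope (RA u) x v = (RA u v - RA u x) / (v - x) := by
        rw [slope_def_field]
      rw [hslope]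
      have := habs (u x) (u v) (min_le_left _ _) (le_max_left _ _) _ hb.1 hb.2
      exact this
  have hu : Filter.Tendsto (fun v => |u v - u x|) (𝓝[s \ {x}] x) (𝓝 0) := by
    have : Filter.Tendsto u (𝓝[s \ {x}] x) (𝓝 (u x)) :=
      hcont.tendsto.mono_left (nhdsWithin_mono _ Set.diff_subset)
    have h2 : Filter.Tendsto (fun v => u v - u x) (𝓝[s \ {x}] x) (𝓝 0) := by
      simpa using this.sub_const (u x)
    simpa using h2.abs
  have hF : Filter.Tendsto (fun v => slope (RA u) x v - u x) (𝓝[s \ {x}] x) (𝓝 0) := by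
    apply squeeze_zero_norm' _ hu
    filter_upwards [self_mem_nhdsWithin] with v hv
    exact key v hv
  have := hF.add_const (u x)
  simpa using this


theorem RA_mem {t : ℝ} (ht : t ∈ domT T) : RA u t ∈ domT (RT T u) := by
  obtain ⟨t', ht', htt'⟩ := domT_exists_gt ht
  refine ⟨h.RA_pos ht, ?_⟩
  calc ENNReal.ofReal (RA u t) < ENNReal.ofReal (RA u t') := by
        rw [ENNReal.ofReal_lt_ofReal_iff (h.RA_pos ht')]
        exact h.RA_strictMonoOn ht ht' htt'
  _ ≤ RT T u := by rw [RT]; exact le_biSup (fun t => ENNReal.ofReal (RA u t)) ht'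

theorem exists_RA_lt {s : ℝ} (hspos : 0 < s) : ∃ t₀ ∈ domT T, t₀ ∈ Set.Ioo (0:ℝ) s ∧ RA u t₀ < s := by
  obtain ⟨t₁, ht₁⟩ := domT_nonempty h.hT
  have hev : ∀ᶠ t in 𝓝[>] (0:ℝ), RA u t < s :=
    h.RA_tendsto_zero (Iio_mem_nhds hspos)
  have hev2 : ∀ᶠ t in 𝓝[>] (0:ℝ), t < min s t₁ :=
    eventually_nhdsWithin_of_eventually_nhds (eventually_lt_nhds (lt_min hspos ht₁.1))
  obtain ⟨t₀, h1, h2, h3⟩ := (hev.and (hev2.and self_mem_nhdsWithin)).exists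
  exact ⟨t₀, domT_mem_of_le ht₁ h3 (le_of_lt (lt_of_lt_of_le h2 (min_le_right _ _))),
    ⟨h3, lt_of_lt_of_le h2 (min_le_left _ _)⟩, h1⟩

theorem image_Ioo {t₁ : ℝ} (ht₁ : t₁ ∈ domT T) :
    RA u '' (Set.Ioo 0 t₁) = Set.Ioo 0 (RA u t₁) := by
  apply Set.Subset.antisymm
  · rintro _ ⟨x, hx, rfl⟩
    have hx' : x ∈ domT T := Ioo_subset_domT ht₁ hx
    exact ⟨h.RA_pos hx', h.RA_strictMonoOn hx' ht₁ hx.2⟩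
  · rintro s ⟨hs0, hs1⟩
    obtain ⟨t₀, ht₀dom, ht₀mem, ht₀lt⟩ := h.exists_RA_lt hs0
    rcases lt_or_ge t₀ t₁ with htt | htt
    · have hsub : Set.Icc t₀ t₁ ⊆ domT T := domT_ordConn ht₁ ht₀dom
      have hcont : ContinuousOn (RA u) (Set.Icc t₀ t₁) := h.RA_continuousOn.mono hsub
      have := intermediate_value_Icc htt.le hcont
      obtain ⟨x, hxmem, hxeq⟩ := this ⟨ht₀lt.le, hs1.le⟩
      refine ⟨x, ⟨lt_of_lt_of_le ht₀mem.1 hxmem.1, ?_⟩, hxeq⟩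
      rcases eq_or_lt_of_le hxmem.2 with heq | hlt
      · exfalso; rw [heq] at hxeq; rw [hxeq] at hs1; exact absurd hs1 (lt_irrefl _)
      · exact hlt
    · exfalso
      have : RA u t₁ ≤ RA u t₀ := h.RA_monotoneOn ht₁ ht₀dom htt
      linarith

theorem image_domT : RA u '' (domT T) = domT (RT T u) := by
  apply Set.Subset.antisymm
  · rintro _ ⟨x, hx, rfl⟩
    exact h.RA_mem hx
  · rintro s ⟨hs0, hsT⟩
    rw [RT, lt_iSup_iff] at hsT
    obtain ⟨t₁, hsT⟩ := hsT
    rw [lt_iSup_iff] at hsT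
    obtain ⟨ht₁, hslt⟩ := hsT
    have hslt' : s < RA u t₁ := by
      by_contra hc
      exact absurd (ENNReal.ofReal_le_ofReal (not_lt.1 hc)) (not_le.2 hslt)
    have : s ∈ Set.Ioo 0 (RA u t₁) := ⟨hs0, hslt'⟩
    rw [← h.image_Ioo ht₁] at this
    obtain ⟨x, hx, hxeq⟩ := this
    exact ⟨x, Ioo_subset_domT ht₁ hx, hxeq⟩

theorem RT_pos : 0 < RT T u := by
  obtain ⟨t, ht⟩ := domT_nonempty h.hT
  refine lt_of_lt_of_le (ENNReal.ofReal_pos.2 (h.RA_pos ht)) ?_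
  rw [RT]; exact le_biSup (fun t => ENNReal.ofReal (RA u t)) ht

theorem exists_RA_eq {s : ℝ} (hs : s ∈ domT (RT T u)) : ∃ t ∈ domT T, RA u t = s := by
  rw [← h.image_domT] at hs
  obtain ⟨t, ht, hteq⟩ := hs
  exact ⟨t, ht, hteq⟩

/-- The inverse map. -/
theorem invFunOn_RA_eq {t : ℝ} (ht : t ∈ domT T) :
    Function.invFunOn (RA u) (domT T) (RA u t) = t :=
  h.RA_injOn.leftInvOn_invFunOn ht

theorem invFunOn_mem_and_eq {s : ℝ} (hs : s ∈ domT (RT T u)) :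
    Function.invFunOn (RA u) (domT T) s ∈ domT T ∧
      RA u (Function.invFunOn (RA u) (domT T) s) = s := by
  obtain ⟨t, ht, hteq⟩ := h.exists_RA_eq hs
  exact ⟨Function.invFunOn_mem ⟨t, ht, hteq⟩, Function.invFunOn_eq ⟨t, ht, hteq⟩⟩

theorem invFunOn_monotoneOn :
    MonotoneOn (Function.invFunOn (RA u) (domT T)) (domT (RT T u)) := by
  intro s₁ hs₁ s₂ hs₂ hle
  obtain ⟨hm₁, he₁⟩ := h.invFunOn_mem_and_eq hs₁
  obtain ⟨hm₂, he₂⟩ := h.invFunOn_mem_and_eq hs₂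
  by_contra hc
  push_neg at hc
  have := h.RA_strictMonoOn hm₂ hm₁ hc
  rw [he₁, he₂] at this
  exact absurd hle (not_le.2 this)

theorem invFunOn_continuousOn :
    ContinuousOn (Function.invFunOn (RA u) (domT T)) (domT (RT T u)) := by
  set φ := Function.invFunOn (RA u) (domT T) with hφ
  intro s₀ hs₀
  obtain ⟨hm₀, he₀⟩ := h.invFunOn_mem_and_eq hs₀
  rw [Metric.continuousWithinAt_iff]
  intro ε hε
  set t₀ := φ s₀
  -- choose tm < t₀ < tp within domT T and within ε of t₀
  obtain ⟨tq, htq, hltp⟩ := domT_exists_gt hm₀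
  set tp := min tq (t₀ + ε/2)
  have htpdom : tp ∈ domT T := domT_mem_of_le htq
    (lt_min (lt_trans hm₀.1 hltp) (by have := hm₀.1; linarith)) (min_le_left _ _)
  have htpgt : t₀ < tp := lt_min hltp (by linarith)
  set tm := t₀ - min (t₀/2) (ε/2)
  have htmpos : 0 < tm := by
    have := hm₀.1
    have h1 : min (t₀/2) (ε/2) ≤ t₀/2 := min_le_left _ _
    simp only [tm]; linarith
  have htmlt : tm < t₀ := by
    have h1 : 0 < min (t₀/2) (ε/2) := lt_min (by linarith [hm₀.1]) (by linarith)
    simp only [tm]; linarith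
  have htmdom : tm ∈ domT T := domT_mem_of_le hm₀ htmpos htmlt.le
  have hAm : RA u tm < s₀ := by
    have := h.RA_strictMonoOn htmdom hm₀ htmlt
    rw [he₀] at this; exact this
  have hAp : s₀ < RA u tp := by
    have := h.RA_strictMonoOn hm₀ htpdom htpgt
    rw [he₀] at this; exact this
  refine ⟨min (s₀ - RA u tm) (RA u tp - s₀), lt_min (by linarith) (by linarith), ?_⟩
  intro s hs hdist
  obtain ⟨hm, he⟩ := h.invFunOn_mem_and_eq hs
  have hd1 : |s - s₀| < s₀ - RA u tm := lt_of_lt_of_le (by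
    rw [Real.dist_eq] at hdist; exact hdist) (min_le_left _ _)
  have hd2 : |s - s₀| < RA u tp - s₀ := lt_of_lt_of_le (by
    rw [Real.dist_eq] at hdist; exact hdist) (min_le_right _ _)
  rw [abs_lt] at hd1 hd2
  obtain ⟨hd1a, hd1b⟩ := hd1
  obtain ⟨hd2a, hd2b⟩ := hd2
  have hlow : RA u tm < s := by linarith
  have hhigh : s < RA u tp := by linarith
  have hφlow : tm < φ s := by
    by_contra hc
    have := h.RA_monotoneOn hm htmdom (not_lt.1 hc)
    rw [he] at this; linarith
  have hφhigh : φ s < tp := by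
    by_contra hc
    have := h.RA_monotoneOn htpdom hm (not_lt.1 hc)
    rw [he] at this; linarith
  rw [Real.dist_eq, abs_lt]
  have e1 : t₀ - tm ≤ ε/2 := by
    have hmm : min (t₀/2) (ε/2) ≤ ε/2 := min_le_right _ _
    have htmeq : tm = t₀ - min (t₀/2) (ε/2) := rfl
    linarith
  have e2 : tp - t₀ ≤ ε/2 := by
    have hmm : tp ≤ t₀ + ε/2 := min_le_right _ _
    linarith
  clear_value φ t₀ tp tm
  exact ⟨by linarith, by linarith⟩

/-- Change of variables. -/
theorem cov {J J₂ : Set ℝ} (hJ : J ⊆ domT T) (hJm : MeasurableSet J)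
    (himg : RA u '' J = J₂) (g : ℝ → ℝ≥0∞) :
    ∫⁻ x in J₂, g x = ∫⁻ x in J, ENNReal.ofReal (u x) * g (RA u x) := by
  classical
  set D := {x ∈ domT T | ¬ContinuousWithinAt u (domT T) x} with hD
  have hDc : Set.Countable D := h.countable_discont
  set s := J \ D with hs
  have hsm : MeasurableSet s := hJm.diff hDc.measurableSet
  have hsub : s ⊆ domT T := fun x hx => hJ hx.1
  have hderiv : ∀ x ∈ s, HasDerivWithinAt (RA u) (u x) s x := by
    intro x hx
    have hcont : ContinuousWithinAt u (domT T) x := by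
      by_contra hc
      exact hx.2 ⟨hJ hx.1, hc⟩
    exact h.hasDerivWithinAt hsub hx (hcont.mono hsub)
  have hinj : Set.InjOn (RA u) s := h.RA_injOn.mono hsub
  have hcov := my_lintegral_cov hsm hderiv hinj g
  -- now identify the two sides
  have himg2 : RA u '' s = J₂ \ (RA u '' (J ∩ D)) := by
    rw [hs, (h.RA_injOn.mono hJ).image_diff, himg]
  have hnull : volume (RA u '' (J ∩ D)) = 0 :=
    Set.Countable.measure_zero (hDc.mono Set.inter_subset_right |>.image _) _
  have hae : RA u '' s =ᵐ[volume] J₂ := by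
    rw [himg2]
    exact MeasureTheory.diff_null_ae_eq_self hnull
  have hae2 : s =ᵐ[volume] J := MeasureTheory.diff_null_ae_eq_self (hDc.measure_zero _)
  rw [← MeasureTheory.setLIntegral_congr hae, hcov, MeasureTheory.setLIntegral_congr hae2]
  apply MeasureTheory.setLIntegral_congr_fun hJm
  intro x hx; dsimp only
  rw [abs_of_pos (h.pos x (hJ hx))]

theorem RT_eq_top (hm : MonotoneOn u (domT T)) (hTtop : T = ⊤) : RT T u = ⊤ := by
  rw [← top_le_iff]
  refine le_of_forall_lt fun b hb => ?_
  obtain ⟨t₀, ht₀⟩ := domT_nonempty h.hT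
  have hut₀ : 0 < u t₀ := h.pos t₀ ht₀
  set c := max b.toReal (RA u t₀) with hc
  set t := t₀ + (c - RA u t₀ + 1) / u t₀ with htdef
  have hcge : RA u t₀ ≤ c := le_max_right _ _
  have htt₀ : t₀ < t := by
    have : 0 < (c - RA u t₀ + 1) / u t₀ := div_pos (by linarith) hut₀
    rw [htdef]; linarith
  have ht : t ∈ domT T := by
    refine ⟨lt_trans ht₀.1 htt₀, ?_⟩
    rw [hTtop]; exact ENNReal.ofReal_lt_top.trans_le le_top
  have hbound := (h.int_Ioo_bounds ht₀ ht htt₀.le).1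
  have humin : u t₀ ≤ min (u t₀) (u t) := le_min le_rfl (hm ht₀ ht htt₀.le)
  have hRAt : c + 1 ≤ RA u t := by
    have h1 : (t - t₀) * u t₀ ≤ (t - t₀) * min (u t₀) (u t) :=
      mul_le_mul_of_nonneg_left humin (by linarith)
    have hu0 : u t₀ ≠ 0 := ne_of_gt hut₀
    have h2 : (t - t₀) * u t₀ = c - RA u t₀ + 1 := by
      rw [htdef]; field_simp; ring
    rw [h.RA_add ht₀ ht htt₀.le]
    linarith
  have hblt : b < ENNReal.ofReal (RA u t) := by
    rw [ENNReal.lt_ofReal_iff_toReal_lt hb.ne]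
    have : b.toReal ≤ c := le_max_left _ _
    linarith
  refine hblt.trans_le ?_
  rw [RT]; exact le_biSup (fun t => ENNReal.ofReal (RA u t)) ht

end Rep

theorem domT_eq_Ioo {T : ℝ≥0∞} (hT : T ≠ ⊤) : domT T = Set.Ioo 0 T.toReal := by
  ext x
  simp only [domT, Set.mem_setOf_eq, Set.mem_Ioo, and_congr_right_iff]
  intro hx
  rw [ENNReal.ofReal_lt_iff_lt_toReal hx.le hT]

theorem volume_domT {T : ℝ≥0∞} (hT : T ≠ ⊤) : volume (domT T) = ENNReal.ofReal T.toReal := by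
  rw [domT_eq_Ioo hT, Real.volume_Ioo, sub_zero]

theorem iSup_domT {T : ℝ≥0∞} (hT : 0 < T) : ⨆ t ∈ domT T, ENNReal.ofReal t = T := by
  apply le_antisymm
  · exact iSup₂_le fun t ht => ht.2.le
  · refine le_of_forall_lt fun b hb => ?_
    obtain ⟨r, hr0, h1, h2⟩ := ENNReal.lt_iff_exists_real_btwn.1 hb
    have hrpos : 0 < r := by
      by_contra h
      rw [ENNReal.ofReal_eq_zero.2 (not_lt.1 h)] at h1
      exact absurd h1 (not_lt.2 (by simp))
    calc b < ENNReal.ofReal r := h1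
    _ ≤ ⨆ t ∈ domT T, ENNReal.ofReal t := le_biSup _ ⟨hrpos, h2⟩




section fNsec
variable {X : Type*} [MetricSpace X] {f : X → EReal} {N : ℝ}

theorem fN_eq_ofReal {x : X} (hx : x ∈ Dom f) :
    fN f N x = ENNReal.ofReal (Real.exp ((-1/N) * (f x).toReal)) := by
  have hco : f x = ((f x).toReal : EReal) := (EReal.coe_toReal hx.1 hx.2).symm
  unfold fN
  conv_lhs => rw [hco, ← EReal.coe_mul]
  unfold eexp
  rw [if_neg (EReal.coe_ne_top _), if_neg (EReal.coe_ne_bot _), EReal.toReal_coe]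

theorem fN_pos {x : X} (hx : x ∈ Dom f) : 0 < fN f N x := by
  rw [fN_eq_ofReal hx]; exact ENNReal.ofReal_pos.2 (Real.exp_pos _)

theorem fN_ne_top {x : X} (hx : x ∈ Dom f) : fN f N x ≠ ⊤ := by
  rw [fN_eq_ofReal hx]; exact ENNReal.ofReal_ne_top

theorem fN_lt_top {x : X} (hx : x ∈ Dom f) : fN f N x < ⊤ :=
  lt_of_le_of_ne le_top (fN_ne_top hx)

theorem fN_toReal {x : X} (hx : x ∈ Dom f) :
    (fN f N x).toReal = Real.exp ((-1/N) * (f x).toReal) := by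
  rw [fN_eq_ofReal hx]; exact ENNReal.toReal_ofReal (Real.exp_pos _).le

theorem fN_toReal_pos {x : X} (hx : x ∈ Dom f) : 0 < (fN f N x).toReal := by
  rw [fN_toReal hx]; exact Real.exp_pos _

theorem fN_inv_eq {x : X} (hx : x ∈ Dom f) :
    (fN f N x)⁻¹ = ENNReal.ofReal (Real.exp ((1/N) * (f x).toReal)) := by
  rw [fN_eq_ofReal hx, ← ENNReal.ofReal_inv_of_pos (Real.exp_pos _), ← Real.exp_neg]
  congr 1
  ring

theorem fN_inv_toReal {x : X} (hx : x ∈ Dom f) :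
    ((fN f N x)⁻¹).toReal = Real.exp ((1/N) * (f x).toReal) := by
  rw [fN_inv_eq hx]; exact ENNReal.toReal_ofReal (Real.exp_pos _).le

theorem fN_inv_toReal_pos {x : X} (hx : x ∈ Dom f) : 0 < ((fN f N x)⁻¹).toReal := by
  rw [fN_inv_toReal hx]; exact Real.exp_pos _

theorem fN_inv_lt_top {x : X} (hx : x ∈ Dom f) : (fN f N x)⁻¹ < ⊤ := by
  rw [fN_inv_eq hx]; exact ENNReal.ofReal_lt_top

theorem uA_mul_fN (hN : N < 0) {x : X} (hx : x ∈ Dom f) :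
    ENNReal.ofReal (-N * ((fN f N x)⁻¹).toReal) * fN f N x = ENNReal.ofReal (-N) := by
  rw [fN_inv_toReal hx, fN_eq_ofReal hx,
    ← ENNReal.ofReal_mul (mul_nonneg (by linarith) (Real.exp_pos _).le)]
  congr 1
  rw [mul_assoc, ← Real.exp_add]
  have : 1/N * (f x).toReal + -1/N * (f x).toReal = 0 := by ring
  rw [this, Real.exp_zero, mul_one]

theorem uB_mul_fN_inv (hN : N < 0) {x : X} (hx : x ∈ Dom f) :
    ENNReal.ofReal (-(1/N) * (fN f N x).toReal) * (fN f N x)⁻¹ = ENNReal.ofReal (-(1/N)) := by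
  have hinv := inv_lt_zero.2 hN
  have hN1 : (0:ℝ) < -(1/N) := by rw [one_div]; linarith
  rw [fN_toReal hx, fN_inv_eq hx,
    ← ENNReal.ofReal_mul (mul_nonneg hN1.le (Real.exp_pos _).le)]
  congr 1
  rw [mul_assoc, ← Real.exp_add]
  have : -1/N * (f x).toReal + 1/N * (f x).toReal = 0 := by ring
  rw [this, Real.exp_zero, mul_one]

end fNsec

section curveinst
variable {X : Type*} [MetricSpace X]

/-- Integrand for `α`. -/
def uA (f : X → EReal) (N : ℝ) (y : ℝ → X) : ℝ → ℝ :=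
  fun t => -N * ((fN f N (y t))⁻¹).toReal

/-- Integrand for `β`. -/
def uB (f : X → EReal) (N : ℝ) (z : ℝ → X) : ℝ → ℝ :=
  fun s => -(1/N) * (fN f N (z s)).toReal

variable {f : X → EReal} {N : ℝ} {T : ℝ≥0∞}

theorem alphaMap_eq {y : ℝ → X} : alphaMap f N y = RA (uA f N y) := by
  funext t
  unfold alphaMap RA uA
  exact (MeasureTheory.integral_const_mul (-N) _).symm

theorem betaMap_eq {z : ℝ → X} : betaMap f N z = RA (uB f N z) := by
  funext s
  unfold betaMap RA uB
  exact (MeasureTheory.integral_const_mul (-(1/N)) _).symm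

theorem R1T_eq {y : ℝ → X} : R1T f N T y = RT T (uA f N y) := by
  unfold R1T RT
  rw [alphaMap_eq]

theorem R2T_eq {z : ℝ → X} : R2T f N T z = RT T (uB f N z) := by
  unfold R2T RT
  rw [betaMap_eq]

theorem R1fun_eq {y : ℝ → X} :
    R1fun f N T y = y ∘ Function.invFunOn (RA (uA f N y)) (domT T) := by
  unfold R1fun
  rw [alphaMap_eq]

theorem R2fun_eq {z : ℝ → X} :
    R2fun f N T z = z ∘ Function.invFunOn (RA (uB f N z)) (domT T) := by
  unfold R2fun
  rw [betaMap_eq]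

theorem uA_monotoneOn (hN : N < 0) {y : ℝ → X} (hy : InC' f T y) :
    MonotoneOn (uA f N y) (domT T) := by
  intro s hs t ht hst
  have hfs : y s ∈ Dom f := hy.1.2.2 s hs
  have hft : y t ∈ Dom f := hy.1.2.2 t ht
  have hmono : f (y t) ≤ f (y s) := hy.2 s hs t ht hst
  have h1 : (f (y t)).toReal ≤ (f (y s)).toReal :=
    EReal.toReal_le_toReal hmono hft.2 hfs.1
  show -N * ((fN f N (y s))⁻¹).toReal ≤ -N * ((fN f N (y t))⁻¹).toReal
  rw [fN_inv_toReal hfs, fN_inv_toReal hft]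
  apply mul_le_mul_of_nonneg_left _ (by linarith : (0:ℝ) ≤ -N)
  apply Real.exp_le_exp.2
  have hN' : (1/N) ≤ 0 := le_of_lt (by rw [one_div]; exact inv_lt_zero.2 hN)
  exact mul_le_mul_of_nonpos_left h1 hN'

theorem uA_pos (hN : N < 0) {y : ℝ → X} (hy : InC' f T y) {t : ℝ} (ht : t ∈ domT T) :
    0 < uA f N y t :=
  mul_pos (by linarith) (fN_inv_toReal_pos (hy.1.2.2 t ht))

theorem rep1 (hN : N < 0) {y : ℝ → X} (hy : InC' f T y) : Rep T (uA f N y) := by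
  refine ⟨hy.1.1, fun t ht => uA_pos hN hy ht, Or.inl (uA_monotoneOn hN hy), ?_⟩
  intro t ht
  have hmono := uA_monotoneOn hN hy
  have hsub : Set.Ioo (0:ℝ) t ⊆ domT T := Ioo_subset_domT ht
  have haem : AEMeasurable (uA f N y) (volume.restrict (Set.Ioo 0 t)) :=
    aemeasurable_restrict_of_monotoneOn measurableSet_Ioo (hmono.mono hsub)
  apply MeasureTheory.Integrable.mono'
    (integrableOn_const (by rw [Real.volume_Ioo]; exact ENNReal.ofReal_ne_top) :
      IntegrableOn (fun _ => uA f N y t) (Set.Ioo 0 t) volume)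
    haem.aestronglyMeasurable
  apply (ae_restrict_iff' measurableSet_Ioo).2 (Filter.Eventually.of_forall fun r hr => ?_)
  rw [Real.norm_eq_abs, abs_of_nonneg (uA_pos hN hy (hsub hr)).le]
  exact hmono (hsub hr) ht hr.2.le

theorem fN_comp_antitoneOn (hN : N < 0) {z : ℝ → X} (hz : InC' f T z) :
    AntitoneOn (fun s => fN f N (z s)) (domT T) := by
  intro s hs t ht hst
  have hfs : z s ∈ Dom f := hz.1.2.2 s hs
  have hft : z t ∈ Dom f := hz.1.2.2 t ht
  have hmono : f (z t) ≤ f (z s) := hz.2 s hs t ht hst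
  have h1 : (f (z t)).toReal ≤ (f (z s)).toReal :=
    EReal.toReal_le_toReal hmono hft.2 hfs.1
  show fN f N (z t) ≤ fN f N (z s)
  rw [fN_eq_ofReal hfs, fN_eq_ofReal hft]
  apply ENNReal.ofReal_le_ofReal
  apply Real.exp_le_exp.2
  apply mul_le_mul_of_nonneg_left h1
  have hinv := inv_lt_zero.2 hN
  rw [neg_div, one_div]
  linarith

theorem uB_antitoneOn (hN : N < 0) {z : ℝ → X} (hz : InC' f T z) :
    AntitoneOn (uB f N z) (domT T) := by
  intro s hs t ht hst
  have h1 := fN_comp_antitoneOn hN hz hs ht hst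
  show -(1/N) * (fN f N (z t)).toReal ≤ -(1/N) * (fN f N (z s)).toReal
  have hN1 : (0:ℝ) ≤ -(1/N) := by
    rw [one_div]
    have := inv_lt_zero.2 hN
    linarith
  apply mul_le_mul_of_nonneg_left _ hN1
  exact ENNReal.toReal_mono (fN_ne_top (hz.1.2.2 s hs)) h1

theorem uB_pos (hN : N < 0) {z : ℝ → X} (hz : InC' f T z) {s : ℝ} (hs : s ∈ domT T) :
    0 < uB f N z s := by
  have hN1 : (0:ℝ) < -(1/N) := by
    rw [one_div]
    have := inv_lt_zero.2 hN
    linarith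
  exact mul_pos hN1 (fN_toReal_pos (hz.1.2.2 s hs))

theorem minT1_pos (hT : 0 < T) : 0 < (min T 1).toReal :=
  ENNReal.toReal_pos (ne_of_gt (lt_min hT zero_lt_one))
    (ne_top_of_le_ne_top ENNReal.one_ne_top (min_le_right _ _))

theorem Ioo_minT1_subset (hT : 0 < T) : Set.Ioo (0:ℝ) ((min T 1).toReal) ⊆ domT T := by
  intro r hr
  refine ⟨hr.1, ?_⟩
  calc ENNReal.ofReal r < ENNReal.ofReal ((min T 1).toReal) :=
        (ENNReal.ofReal_lt_ofReal_iff (minT1_pos hT)).2 hr.2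
  _ ≤ min T 1 := ENNReal.ofReal_toReal_le
  _ ≤ T := min_le_left _ _

theorem rep2 (hN : N < 0) {z : ℝ → X} (hz : InC'' f N T z) : Rep T (uB f N z) := by
  have hz' := hz.1
  have hT : 0 < T := hz'.1.1
  refine ⟨hT, fun s hs => uB_pos hN hz' hs, Or.inr (uB_antitoneOn hN hz'), ?_⟩
  intro t ht
  set S := (min T 1).toReal with hSdef
  have hSpos : 0 < S := minT1_pos hT
  have hS2dom : S/2 ∈ domT T := Ioo_minT1_subset hT ⟨by linarith, by linarith⟩
  have hN1 : (0:ℝ) < -(1/N) := by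
    rw [one_div]
    have := inv_lt_zero.2 hN
    linarith
  have hint1 : IntegrableOn (uB f N z) (Set.Ioo 0 S) volume := by
    have haem : AEMeasurable (fun r => fN f N (z r)) (volume.restrict (Set.Ioo 0 S)) :=
      aemeasurable_restrict_of_antitoneOn measurableSet_Ioo
        ((fN_comp_antitoneOn hN hz').mono (Ioo_minT1_subset hT))
    have hfin : ∫⁻ r in Set.Ioo 0 S, fN f N (z r) ≠ ⊤ := hz.2.ne
    have := MeasureTheory.integrable_toReal_of_lintegral_ne_top haem hfin
    exact this.const_mul (-(1/N))
  have hint2 : IntegrableOn (uB f N z) (Set.Icc (S/2) t) volume := by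
    have hsub2 : Set.Icc (S/2) t ⊆ domT T := by
      rcases le_or_gt (S/2) t with hle | hlt
      · exact domT_ordConn ht hS2dom
      · rw [Set.Icc_eq_empty (not_le.2 hlt)]; exact Set.empty_subset _
    have haem : AEMeasurable (uB f N z) (volume.restrict (Set.Icc (S/2) t)) :=
      aemeasurable_restrict_of_antitoneOn measurableSet_Icc
        ((uB_antitoneOn hN hz').mono hsub2)
    apply MeasureTheory.Integrable.mono'
      (integrableOn_const (by rw [Real.volume_Icc]; exact ENNReal.ofReal_ne_top) :
        IntegrableOn (fun _ => uB f N z (S/2)) (Set.Icc (S/2) t) volume)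
      haem.aestronglyMeasurable
    apply (ae_restrict_iff' measurableSet_Icc).2 (Filter.Eventually.of_forall fun r hr => ?_)
    rw [Real.norm_eq_abs, abs_of_nonneg (uB_pos hN hz' (hsub2 hr)).le]
    exact (uB_antitoneOn hN hz') hS2dom (hsub2 hr) hr.1
  apply (hint1.union hint2).mono_set
  intro r hr
  rcases lt_or_ge r S with hrS | hrS
  · exact Or.inl ⟨hr.1, hrS⟩
  · exact Or.inr ⟨by linarith, hr.2.le⟩

end curveinst

section mains
variable {X : Type*} [MetricSpace X] {f : X → EReal} {N : ℝ} {T : ℝ≥0∞} {y z : ℝ → X}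

theorem R1fun_RA (hN : N < 0) (hy : InC' f T y) {t : ℝ} (ht : t ∈ domT T) :
    R1fun f N T y (RA (uA f N y) t) = y t := by
  rw [R1fun_eq]
  show y (Function.invFunOn (RA (uA f N y)) (domT T) (RA (uA f N y) t)) = y t
  rw [(rep1 hN hy).invFunOn_RA_eq ht]

theorem R2fun_RA (hN : N < 0) (hz : InC'' f N T z) {s : ℝ} (hs : s ∈ domT T) :
    R2fun f N T z (RA (uB f N z) s) = z s := by
  rw [R2fun_eq]
  show z (Function.invFunOn (RA (uB f N z)) (domT T) (RA (uB f N z) s)) = z s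
  rw [(rep2 hN hz).invFunOn_RA_eq hs]

theorem lint1 (hN : N < 0) (hy : InC' f T y) {J J₂ : Set ℝ} (hJ : J ⊆ domT T)
    (hJm : MeasurableSet J) (himg : RA (uA f N y) '' J = J₂) :
    ∫⁻ x in J₂, fN f N (R1fun f N T y x) = ENNReal.ofReal (-N) * volume J := by
  rw [(rep1 hN hy).cov hJ hJm himg]
  rw [MeasureTheory.setLIntegral_congr_fun hJm
    (fun x hx => ?_), MeasureTheory.setLIntegral_const]
  rw [R1fun_RA hN hy (hJ hx)]
  show ENNReal.ofReal (-N * ((fN f N (y x))⁻¹).toReal) * fN f N (y x) = ENNReal.ofReal (-N)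
  exact uA_mul_fN hN (hy.1.2.2 x (hJ hx))

theorem lint2 (hN : N < 0) (hz : InC'' f N T z) {J J₂ : Set ℝ} (hJ : J ⊆ domT T)
    (hJm : MeasurableSet J) (himg : RA (uB f N z) '' J = J₂) :
    ∫⁻ x in J₂, (fN f N (R2fun f N T z x))⁻¹ = ENNReal.ofReal (-(1/N)) * volume J := by
  rw [(rep2 hN hz).cov hJ hJm himg]
  rw [MeasureTheory.setLIntegral_congr_fun hJm
    (fun x hx => ?_), MeasureTheory.setLIntegral_const]
  rw [R2fun_RA hN hz (hJ hx)]
  show ENNReal.ofReal (-(1/N) * (fN f N (z x)).toReal) * (fN f N (z x))⁻¹ = ENNReal.ofReal (-(1/N))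
  exact uB_mul_fN_inv hN (hz.1.1.2.2 x (hJ hx))

theorem main1 (hN : N < 0) (hy : InC' f T y) :
    InC'' f N (R1T f N T y) (R1fun f N T y) := by
  have h₁ := rep1 hN hy
  have hmemmap : ∀ s ∈ domT (RT T (uA f N y)),
      Function.invFunOn (RA (uA f N y)) (domT T) s ∈ domT T :=
    fun s hs => (h₁.invFunOn_mem_and_eq hs).1
  constructor
  · constructor
    · refine ⟨?_, ?_, ?_⟩
      · rw [R1T_eq]; exact h₁.RT_pos
      · rw [R1fun_eq, R1T_eq]
        exact ContinuousOn.comp hy.1.2.1 h₁.invFunOn_continuousOn hmemmap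
      · intro s hs
        rw [R1T_eq] at hs
        rw [R1fun_eq]
        exact hy.1.2.2 _ (hmemmap s hs)
    · intro s hs t ht hst
      rw [R1T_eq] at hs ht
      rw [R1fun_eq]
      exact hy.2 _ (hmemmap s hs) _ (hmemmap t ht)
        (h₁.invFunOn_monotoneOn hs ht hst)
  · rw [R1T_eq]
    by_cases hTtop : T = ⊤
    · have hRT : RT T (uA f N y) = ⊤ := h₁.RT_eq_top (uA_monotoneOn hN hy) hTtop
      have h1mem : (1:ℝ) ∈ domT (RT T (uA f N y)) := by
        rw [hRT]
        exact ⟨one_pos, ENNReal.ofReal_lt_top.trans_le le_top⟩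
      obtain ⟨t₁, ht₁, hA1⟩ := h₁.exists_RA_eq h1mem
      have hIoo : Set.Ioo (0:ℝ) ((min (RT T (uA f N y)) 1).toReal) = Set.Ioo 0 1 := by
        rw [hRT]
        norm_num
      rw [hIoo, ← hA1,
        lint1 hN hy (Ioo_subset_domT ht₁) measurableSet_Ioo (h₁.image_Ioo ht₁)]
      exact ENNReal.mul_lt_top ENNReal.ofReal_lt_top
        (by rw [Real.volume_Ioo]; exact ENNReal.ofReal_lt_top)
    · have hsub : Set.Ioo (0:ℝ) ((min (RT T (uA f N y)) 1).toReal) ⊆ domT (RT T (uA f N y)) := by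
        intro x hx
        refine ⟨hx.1, ?_⟩
        calc ENNReal.ofReal x < ENNReal.ofReal ((min (RT T (uA f N y)) 1).toReal) :=
              (ENNReal.ofReal_lt_ofReal_iff (lt_trans hx.1 hx.2)).2 hx.2
        _ ≤ min (RT T (uA f N y)) 1 := ENNReal.ofReal_toReal_le
        _ ≤ RT T (uA f N y) := min_le_left _ _
      calc ∫⁻ x in Set.Ioo (0:ℝ) ((min (RT T (uA f N y)) 1).toReal),
            fN f N (R1fun f N T y x) ≤
          ∫⁻ x in domT (RT T (uA f N y)), fN f N (R1fun f N T y x) :=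
            MeasureTheory.lintegral_mono_set hsub
      _ = ENNReal.ofReal (-N) * volume (domT T) :=
            lint1 hN hy (fun x hx => hx) measurableSet_domT h₁.image_domT
      _ < ⊤ := by
            rw [volume_domT hTtop]
            exact ENNReal.mul_lt_top ENNReal.ofReal_lt_top ENNReal.ofReal_lt_top

theorem beta_alpha (hN : N < 0) (hy : InC' f T y) {t : ℝ} (ht : t ∈ domT T) :
    betaMap f N (R1fun f N T y) (RA (uA f N y) t) = t := by
  have h₁ := rep1 hN hy
  have hz := main1 hN hy
  have hz' : InC' f (RT T (uA f N y)) (R1fun f N T y) := by rw [← R1T_eq]; exact hz.1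
  have hAt : RA (uA f N y) t ∈ domT (RT T (uA f N y)) := h₁.RA_mem ht
  have hIoosub : Set.Ioo 0 (RA (uA f N y) t) ⊆ domT (RT T (uA f N y)) := Ioo_subset_domT hAt
  have haem : AEMeasurable (fun r => fN f N (R1fun f N T y r))
      (volume.restrict (Set.Ioo 0 (RA (uA f N y) t))) :=
    aemeasurable_restrict_of_antitoneOn measurableSet_Ioo
      ((fN_comp_antitoneOn hN hz').mono hIoosub)
  have hfin : ∀ᵐ r ∂(volume.restrict (Set.Ioo 0 (RA (uA f N y) t))),
      fN f N (R1fun f N T y r) < ⊤ :=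
    (ae_restrict_iff' measurableSet_Ioo).2 (Filter.Eventually.of_forall
      (fun r hr => fN_lt_top (hz'.1.2.2 r (hIoosub hr))))
  rw [betaMap, MeasureTheory.integral_toReal haem hfin,
    lint1 hN hy (Ioo_subset_domT ht) measurableSet_Ioo (h₁.image_Ioo ht)]
  rw [Real.volume_Ioo, sub_zero, ENNReal.toReal_mul,
    ENNReal.toReal_ofReal (by linarith : (0:ℝ) ≤ -N),
    ENNReal.toReal_ofReal ht.1.le]
  have hN0 : N ≠ 0 := ne_of_lt hN
  field_simp

theorem main2 (hN : N < 0) (hz : InC'' f N T z) :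
    InC' f (R2T f N T z) (R2fun f N T z) := by
  have h₂ := rep2 hN hz
  have hmemmap : ∀ s ∈ domT (RT T (uB f N z)),
      Function.invFunOn (RA (uB f N z)) (domT T) s ∈ domT T :=
    fun s hs => (h₂.invFunOn_mem_and_eq hs).1
  constructor
  · refine ⟨?_, ?_, ?_⟩
    · rw [R2T_eq]; exact h₂.RT_pos
    · rw [R2fun_eq, R2T_eq]
      exact ContinuousOn.comp hz.1.1.2.1 h₂.invFunOn_continuousOn hmemmap
    · intro s hs
      rw [R2T_eq] at hs
      rw [R2fun_eq]
      exact hz.1.1.2.2 _ (hmemmap s hs)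
  · intro s hs t ht hst
    rw [R2T_eq] at hs ht
    rw [R2fun_eq]
    exact hz.1.2 _ (hmemmap s hs) _ (hmemmap t ht)
      (h₂.invFunOn_monotoneOn hs ht hst)

theorem alpha_beta (hN : N < 0) (hz : InC'' f N T z) {s : ℝ} (hs : s ∈ domT T) :
    alphaMap f N (R2fun f N T z) (RA (uB f N z) s) = s := by
  have h₂ := rep2 hN hz
  have hw : InC' f (R2T f N T z) (R2fun f N T z) := main2 hN hz
  have hw' : InC' f (RT T (uB f N z)) (R2fun f N T z) := by rw [← R2T_eq]; exact hw
  have hAs : RA (uB f N z) s ∈ domT (RT T (uB f N z)) := h₂.RA_mem hs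
  have hIoosub : Set.Ioo 0 (RA (uB f N z) s) ⊆ domT (RT T (uB f N z)) := Ioo_subset_domT hAs
  have hmono : MonotoneOn (fun r => (fN f N (R2fun f N T z r))⁻¹) (domT (RT T (uB f N z))) := by
    intro a ha b hb hab
    exact ENNReal.inv_le_inv.2 ((fN_comp_antitoneOn hN hw') ha hb hab)
  have haem : AEMeasurable (fun r => (fN f N (R2fun f N T z r))⁻¹)
      (volume.restrict (Set.Ioo 0 (RA (uB f N z) s))) :=
    aemeasurable_restrict_of_monotoneOn measurableSet_Ioo (hmono.mono hIoosub)
  have hfin : ∀ᵐ r ∂(volume.restrict (Set.Ioo 0 (RA (uB f N z) s))),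
      (fN f N (R2fun f N T z r))⁻¹ < ⊤ :=
    (ae_restrict_iff' measurableSet_Ioo).2 (Filter.Eventually.of_forall
      (fun r hr => fN_inv_lt_top (hw'.1.2.2 r (hIoosub hr))))
  rw [alphaMap, MeasureTheory.integral_toReal haem hfin,
    lint2 hN hz (Ioo_subset_domT hs) measurableSet_Ioo (h₂.image_Ioo hs)]
  rw [Real.volume_Ioo, sub_zero, ENNReal.toReal_mul,
    ENNReal.toReal_ofReal (by
      have := inv_lt_zero.2 hN
      rw [one_div]
      linarith : (0:ℝ) ≤ -(1/N)),
    ENNReal.toReal_ofReal hs.1.le]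
  have hN0 : N ≠ 0 := ne_of_lt hN
  field_simp


theorem part3 (hN : N < 0) (hy : InC' f T y) :
    R2T f N (R1T f N T y) (R1fun f N T y) = T ∧
    ∀ t ∈ domT T, R2fun f N (R1T f N T y) (R1fun f N T y) t = y t := by
  have h₁ := rep1 hN hy
  have hz : InC'' f N (R1T f N T y) (R1fun f N T y) := main1 hN hy
  have h₂ := rep2 hN hz
  have hmem : ∀ t ∈ domT T, RA (uA f N y) t ∈ domT (R1T f N T y) := by
    intro t ht
    rw [R1T_eq]
    exact h₁.RA_mem ht
  constructor
  · apply le_antisymm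
    · rw [R2T]
      apply iSup₂_le
      intro s hs
      have hs' : s ∈ domT (RT T (uA f N y)) := by rw [← R1T_eq]; exact hs
      obtain ⟨t, ht, hteq⟩ := h₁.exists_RA_eq hs'
      rw [← hteq, beta_alpha hN hy ht]
      exact ht.2.le
    · conv_lhs => rw [← iSup_domT hy.1.1]
      apply iSup₂_le
      intro t ht
      calc ENNReal.ofReal t
          = ENNReal.ofReal (betaMap f N (R1fun f N T y) (RA (uA f N y) t)) := by
            rw [beta_alpha hN hy ht]
      _ ≤ R2T f N (R1T f N T y) (R1fun f N T y) := by
            rw [R2T]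
            exact le_biSup (fun s => ENNReal.ofReal (betaMap f N (R1fun f N T y) s))
              (hmem t ht)
  · intro t ht
    have hex : ∃ s ∈ domT (R1T f N T y), betaMap f N (R1fun f N T y) s = t :=
      ⟨RA (uA f N y) t, hmem t ht, beta_alpha hN hy ht⟩
    have hψmem := Function.invFunOn_mem hex
    have hψeq := Function.invFunOn_eq hex
    have hinj : Set.InjOn (betaMap f N (R1fun f N T y)) (domT (R1T f N T y)) := by
      rw [betaMap_eq]
      exact h₂.RA_injOn
    have heq : Function.invFunOn (betaMap f N (R1fun f N T y)) (domT (R1T f N T y)) t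
        = RA (uA f N y) t :=
      hinj hψmem (hmem t ht) (by rw [hψeq, beta_alpha hN hy ht])
    show R1fun f N T y (Function.invFunOn (betaMap f N (R1fun f N T y))
      (domT (R1T f N T y)) t) = y t
    rw [heq]
    exact R1fun_RA hN hy ht

theorem part4 (hN : N < 0) (hz : InC'' f N T z) :
    R1T f N (R2T f N T z) (R2fun f N T z) = T ∧
    ∀ s ∈ domT T, R1fun f N (R2T f N T z) (R2fun f N T z) s = z s := by
  have h₂ := rep2 hN hz
  have hw : InC' f (R2T f N T z) (R2fun f N T z) := main2 hN hz
  have h₁w := rep1 hN hw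
  have hmem : ∀ s ∈ domT T, RA (uB f N z) s ∈ domT (R2T f N T z) := by
    intro s hs
    rw [R2T_eq]
    exact h₂.RA_mem hs
  constructor
  · apply le_antisymm
    · rw [R1T]
      apply iSup₂_le
      intro s hs
      have hs' : s ∈ domT (RT T (uB f N z)) := by rw [← R2T_eq]; exact hs
      obtain ⟨t, ht, hteq⟩ := h₂.exists_RA_eq hs'
      rw [← hteq, alpha_beta hN hz ht]
      exact ht.2.le
    · conv_lhs => rw [← iSup_domT hz.1.1.1]
      apply iSup₂_le
      intro s hs
      calc ENNReal.ofReal s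
          = ENNReal.ofReal (alphaMap f N (R2fun f N T z) (RA (uB f N z) s)) := by
            rw [alpha_beta hN hz hs]
      _ ≤ R1T f N (R2T f N T z) (R2fun f N T z) := by
            rw [R1T]
            exact le_biSup (fun r => ENNReal.ofReal (alphaMap f N (R2fun f N T z) r))
              (hmem s hs)
  · intro s hs
    have hex : ∃ r ∈ domT (R2T f N T z), alphaMap f N (R2fun f N T z) r = s :=
      ⟨RA (uB f N z) s, hmem s hs, alpha_beta hN hz hs⟩
    have hψmem := Function.invFunOn_mem hex
    have hψeq := Function.invFunOn_eq hex
    have hinj : Set.InjOn (alphaMap f N (R2fun f N T z)) (domT (R2T f N T z)) := by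
      rw [alphaMap_eq]
      exact h₁w.RA_injOn
    have heq : Function.invFunOn (alphaMap f N (R2fun f N T z)) (domT (R2T f N T z)) s
        = RA (uB f N z) s :=
      hinj hψmem (hmem s hs) (by rw [hψeq, alpha_beta hN hz hs])
    show R2fun f N T z (Function.invFunOn (alphaMap f N (R2fun f N T z))
      (domT (R2T f N T z)) s) = z s
    rw [heq]
    exact R2fun_RA hN hz hs

end mains
end KNPaper

theorem stmt_5 {X : Type*} [MetricSpace X] (f : X → EReal) (N : ℝ) (hN : N < 0)
    (hlsc : LowerSemicontinuous f) (hD : (KNPaper.Dom f).Nonempty) :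
    (∀ (T : ℝ≥0∞) (y : ℝ → X), KNPaper.InC' f T y →
        KNPaper.InC'' f N (KNPaper.R1T f N T y) (KNPaper.R1fun f N T y)) ∧
    (∀ (T : ℝ≥0∞) (z : ℝ → X), KNPaper.InC'' f N T z →
        KNPaper.InC' f (KNPaper.R2T f N T z) (KNPaper.R2fun f N T z)) ∧
    (∀ (T : ℝ≥0∞) (y : ℝ → X), KNPaper.InC' f T y →
        KNPaper.R2T f N (KNPaper.R1T f N T y) (KNPaper.R1fun f N T y) = T ∧
        ∀ t ∈ KNPaper.domT T,
          KNPaper.R2fun f N (KNPaper.R1T f N T y) (KNPaper.R1fun f N T y) t = y t) ∧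
    (∀ (T : ℝ≥0∞) (z : ℝ → X), KNPaper.InC'' f N T z →
        KNPaper.R1T f N (KNPaper.R2T f N T z) (KNPaper.R2fun f N T z) = T ∧
        ∀ s ∈ KNPaper.domT T,
          KNPaper.R1fun f N (KNPaper.R2T f N T z) (KNPaper.R2fun f N T z) s = z s) :=
  ⟨fun _ _ hy => KNPaper.main1 hN hy, fun _ _ hz => KNPaper.main2 hN hz,
    fun _ _ hy => KNPaper.part3 hN hy, fun _ _ hz => KNPaper.part4 hN hz⟩
end
end
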